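/- arXiv:1810.08349 — 4 statements merged into one kernel-verified Lean document; each statement's English description precedes it below -/
import Mathlib

section
/- Let (X,Σ_X,μ) and (Y,Σ_Y,ν) be finite positive measure spaces with μ(X) = ν(Y), and let Φ : M_μ → M_ν be a Markov transfunction. Then for every finite positive measure λ ∈ M_μ, setting ρ := Φλ (a finite positive measure in M_ν), there exists a Markov operator T : L^∞(X,λ) → L^∞(Y,ρ) such that ∫_B T(1_A) dρ = Φ(1_A λ)(B) for all measurable A ⊆ X and B ⊆ Y. -/
open MeasureTheory Filter Topology

/-- total variation norm of a finite signed measure -/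
noncomputable def tv {Z : Type*} [MeasurableSpace Z] (s : SignedMeasure Z) : ℝ :=
  (SignedMeasure.totalVariation s Set.univ).toReal

/-- `M_μ`: the set of finite signed measures absolutely continuous with respect to `μ`. -/
def AC {Z : Type*} [MeasurableSpace Z] (μ : Measure Z) : Set (SignedMeasure Z) :=
  {s | VectorMeasure.AbsolutelyContinuous s μ.toENNRealVectorMeasure}

/-- withDensityᵥ of the constant 1 function is the signed measure itself. -/
lemma wd_one {Z : Type*} [MeasurableSpace Z] (m : Measure Z) [IsFiniteMeasure m] :
    m.withDensityᵥ (fun _ => (1 : ℝ)) = m.toSignedMeasure := by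
  ext i hi
  rw [withDensityᵥ_apply (integrable_const 1) hi, Measure.toSignedMeasure_apply_measurable hi,
    setIntegral_const, smul_eq_mul, mul_one]

/-- Let `Φ : M_μ → M_ν` be a Markov transfunction (linear, total-variation
continuous, positive, measure-preserving).  Then for every finite positive measure `λ ∈ M_μ`,
the measure `ρ := Φλ` is a finite positive measure in `M_ν`, and there is a Markov operator
`T : L^∞(X,λ) → L^∞(Y,ρ)` with `∫_B T(1_A) dρ = Φ(1_A λ)(B)` for all measurable `A`, `B`. -/
theorem stmt2 {X Y : Type*} [MeasurableSpace X] [MeasurableSpace Y]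
    (μ : Measure X) (ν : Measure Y) [IsFiniteMeasure μ] [IsFiniteMeasure ν]
    (hμν : μ Set.univ = ν Set.univ)
    (Φ : AC μ → AC ν)
    (hadd : ∀ a b c : AC μ, c.1 = a.1 + b.1 → (Φ c).1 = (Φ a).1 + (Φ b).1)
    (hsmul : ∀ (r : ℝ) (a c : AC μ), c.1 = r • a.1 → (Φ c).1 = r • (Φ a).1)
    (hbdd : ∃ C : ℝ, ∀ a : AC μ, tv (Φ a).1 ≤ C * tv a.1)
    (hpos : ∀ a : AC μ, 0 ≤ a.1 → 0 ≤ (Φ a).1)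
    (hpres : ∀ a : AC μ, (Φ a).1 Set.univ = a.1 Set.univ)
    (lam : Measure X) [IsFiniteMeasure lam] (hlam : lam.toSignedMeasure ∈ AC μ) :
    -- `ρ := Φλ` is a (finite) positive measure
    0 ≤ (Φ ⟨lam.toSignedMeasure, hlam⟩).1 ∧
    -- for any finite positive measure `ρ` realizing `Φλ`, there is a Markov operator
    -- `T : L^∞(X,λ) → L^∞(Y,ρ)` with the stated property
    ∀ (ρ : Measure Y) [IsFiniteMeasure ρ],
      ρ.toSignedMeasure = (Φ ⟨lam.toSignedMeasure, hlam⟩).1 →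
      ∃ T : Lp ℝ ⊤ lam →ₗ[ℝ] Lp ℝ ⊤ ρ,
        -- T 1_X = 1_Y
        T (indicatorConstLp ⊤ MeasurableSet.univ (measure_ne_top lam _) (1 : ℝ)) =
          indicatorConstLp ⊤ MeasurableSet.univ (measure_ne_top ρ _) (1 : ℝ) ∧
        -- T is positive
        (∀ f : Lp ℝ ⊤ lam, 0 ≤ᵐ[lam] (f : X → ℝ) → 0 ≤ᵐ[ρ] (T f : Y → ℝ)) ∧
        -- T is integral-preserving
        (∀ f : Lp ℝ ⊤ lam, ∫ y, (T f : Y → ℝ) y ∂ρ = ∫ x, (f : X → ℝ) x ∂lam) ∧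
        -- ∫_B T(1_A) dρ = Φ(1_A λ)(B)
        (∀ (A : Set X) (hA : MeasurableSet A) (B : Set Y), MeasurableSet B →
          ∀ a : AC μ, a.1 = lam.withDensityᵥ (A.indicator fun _ => (1 : ℝ)) →
            ∫ y in B, (T (indicatorConstLp ⊤ hA (measure_ne_top lam A) (1 : ℝ)) : Y → ℝ) y ∂ρ =
              (Φ a).1 B) := by
  classical
  have hlam0 : (0 : SignedMeasure X) ≤ lam.toSignedMeasure := by
    rw [VectorMeasure.le_iff]
    intro i hi
    rw [VectorMeasure.zero_apply, Measure.toSignedMeasure_apply_measurable hi]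
    exact ENNReal.toReal_nonneg
  refine ⟨hpos _ hlam0, ?_⟩
  intro ρ _ hρ
  -- membership of all withDensityᵥ's in AC μ
  have hlamAC : lam.toENNRealVectorMeasure ≪ᵥ μ.toENNRealVectorMeasure := by
    refine VectorMeasure.AbsolutelyContinuous.mk fun s hs h0 => ?_
    have h1 := hlam h0
    rw [Measure.toSignedMeasure_apply_measurable hs] at h1
    rw [Measure.toENNRealVectorMeasure_apply_measurable hs]
    exact (ENNReal.toReal_eq_zero_iff _).mp h1 |>.resolve_right (measure_ne_top lam s)
  have memAC : ∀ f : X → ℝ, lam.withDensityᵥ f ∈ AC μ := fun f =>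
    (lam.withDensityᵥ_absolutelyContinuous f).trans hlamAC
  set Ψ : (X → ℝ) → SignedMeasure Y := fun f => (Φ ⟨lam.withDensityᵥ f, memAC f⟩).1 with hΨdef
  have Ψcongr : ∀ f g : X → ℝ, f =ᵐ[lam] g → Ψ f = Ψ g := fun f g h =>
    congrArg (fun s => (Φ s).1) (Subtype.ext (WithDensityᵥEq.congr_ae h))
  have Ψone : Ψ (fun _ => (1 : ℝ)) = ρ.toSignedMeasure := by
    show (Φ ⟨lam.withDensityᵥ (fun _ => (1:ℝ)), memAC _⟩).1 = ρ.toSignedMeasure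
    rw [show (⟨lam.withDensityᵥ (fun _ => (1:ℝ)), memAC _⟩ : AC μ)
        = ⟨lam.toSignedMeasure, hlam⟩ from Subtype.ext (wd_one lam), ← hρ]
  have hwdpos : ∀ f : X → ℝ, Integrable f lam → 0 ≤ᵐ[lam] f →
      (0 : SignedMeasure X) ≤ lam.withDensityᵥ f := by
    intro f hf hf0
    rw [VectorMeasure.le_iff]
    intro i hi
    rw [VectorMeasure.zero_apply, withDensityᵥ_apply hf hi]
    exact integral_nonneg_of_ae (ae_restrict_of_ae hf0)
  have Ψpos : ∀ f : X → ℝ, Integrable f lam → 0 ≤ᵐ[lam] f → (0 : SignedMeasure Y) ≤ Ψ f :=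
    fun f hf hf0 => hpos _ (hwdpos f hf hf0)
  -- key bound for nonnegative bounded densities
  have key : ∀ (g : X → ℝ) (c : ℝ), Integrable g lam → 0 ≤ᵐ[lam] g →
      (∀ᵐ x ∂lam, g x ≤ c) → ∀ B, MeasurableSet B →
      0 ≤ Ψ g B ∧ Ψ g B ≤ c * (ρ B).toReal := by
    intro g c hgi hg0 hgc B hB
    have hhi : Integrable (fun x => c - g x) lam := (integrable_const c).sub hgi
    have hh0 : (0 : X → ℝ) ≤ᵐ[lam] fun x => c - g x := by
      filter_upwards [hgc] with x hx
      simpa using sub_nonneg.2 hx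
    have hsplit : lam.withDensityᵥ (fun _ => c)
        = lam.withDensityᵥ g + lam.withDensityᵥ (fun x => c - g x) := by
      rw [← withDensityᵥ_add' hgi hhi]
      congr 1; funext x; ring
    have hΨsplit : Ψ (fun _ => c) = Ψ g + Ψ (fun x => c - g x) :=
      hadd ⟨_, memAC g⟩ ⟨_, memAC (fun x => c - g x)⟩ ⟨_, memAC (fun _ => c)⟩ hsplit
    have hconst : Ψ (fun _ => c) = c • ρ.toSignedMeasure := by
      have h1 : lam.withDensityᵥ (fun _ : X => c)
          = c • lam.withDensityᵥ (fun _ => (1:ℝ)) := by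
        rw [← withDensityᵥ_smul]; congr 1; funext x; simp
      show (Φ ⟨lam.withDensityᵥ (fun _ : X => c), memAC _⟩).1 = c • ρ.toSignedMeasure
      rw [hsmul c ⟨_, memAC (fun _ => (1:ℝ))⟩ ⟨_, memAC (fun _ => c)⟩ h1,
        show (Φ ⟨lam.withDensityᵥ (fun _ => (1:ℝ)), memAC _⟩).1 = ρ.toSignedMeasure from Ψone]
    have h2 : Ψ g B + Ψ (fun x => c - g x) B = c * (ρ B).toReal := by
      have := congrArg (fun s : SignedMeasure Y => s B) hΨsplit
      rw [hconst] at this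
      simp only [VectorMeasure.add_apply, VectorMeasure.smul_apply,
        Measure.toSignedMeasure_apply_measurable hB, smul_eq_mul] at this
      rw [show ρ.real B = (ρ B).toReal from rfl] at this
      linarith [this]
    have h3 : 0 ≤ Ψ g B := by
      have := VectorMeasure.le_iff.mp (Ψpos g hgi hg0) B hB
      simpa [VectorMeasure.zero_apply] using this
    have h4 : 0 ≤ Ψ (fun x => c - g x) B := by
      have := VectorMeasure.le_iff.mp (Ψpos _ hhi hh0) B hB
      simpa [VectorMeasure.zero_apply] using this
    exact ⟨h3, by linarith⟩
  -- integrability of members of Lp spaces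
  have intlam : ∀ f : Lp ℝ ⊤ lam, Integrable (f : X → ℝ) lam :=
    fun f => (Lp.memLp f).integrable le_top
  have intρ : ∀ u : Lp ℝ ⊤ ρ, Integrable (u : Y → ℝ) ρ :=
    fun u => (Lp.memLp u).integrable le_top
  -- construction of T f
  have exT : ∀ f : Lp ℝ ⊤ lam, ∃ g : Lp ℝ ⊤ ρ,
      ρ.withDensityᵥ (g : Y → ℝ) = Ψ (f : X → ℝ) := by
    intro f
    set F : X → ℝ := (f : X → ℝ) with hF
    set c : ℝ := (eLpNormEssSup F lam).toReal with hc
    have hc0 : 0 ≤ c := ENNReal.toReal_nonneg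
    have hcfin : eLpNormEssSup F lam ≠ ⊤ := by
      have := (Lp.memLp f).2
      rw [eLpNorm_exponent_top] at this
      exact this.ne
    have hFbd : ∀ᵐ x ∂lam, |F x| ≤ c := by
      filter_upwards [ae_le_eLpNormEssSup (f := F) (μ := lam)] with x hx
      have h1 : ((‖F x‖₊ : ENNReal)).toReal ≤ c := ENNReal.toReal_mono hcfin hx
      simpa [Real.norm_eq_abs] using h1
    set Fp : X → ℝ := fun x => max (F x) 0 with hFp
    set Fm : X → ℝ := fun x => max (-F x) 0 with hFm
    have hFi : Integrable F lam := intlam f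
    have hFpi : Integrable Fp lam := hFi.pos_part
    have hFmi : Integrable Fm lam := hFi.neg.pos_part
    have hFp0 : 0 ≤ᵐ[lam] Fp := Eventually.of_forall fun x => le_max_right _ _
    have hFm0 : 0 ≤ᵐ[lam] Fm := Eventually.of_forall fun x => le_max_right _ _
    have hFpc : ∀ᵐ x ∂lam, Fp x ≤ c := by
      filter_upwards [hFbd] with x hx
      simp only [hFp]
      exact max_le (le_of_abs_le hx) hc0
    have hFmc : ∀ᵐ x ∂lam, Fm x ≤ c := by
      filter_upwards [hFbd] with x hx
      simp only [hFm]
      refine max_le ?_ hc0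
      have h2 : |(-F x)| ≤ c := by rwa [abs_neg]
      exact le_of_abs_le h2
    have hsplit : lam.withDensityᵥ Fp = lam.withDensityᵥ F + lam.withDensityᵥ Fm := by
      rw [← withDensityᵥ_add' hFi hFmi]
      congr 1; funext x
      simp only [hFp, hFm]
      rcases le_total (F x) 0 with h | h
      · simp [max_eq_right h, max_eq_left (neg_nonneg.2 h)]
      · simp [max_eq_left h, max_eq_right (neg_nonpos.2 h)]
    have hΨsplit : Ψ Fp = Ψ F + Ψ Fm :=
      hadd ⟨_, memAC F⟩ ⟨_, memAC Fm⟩ ⟨_, memAC Fp⟩ hsplit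
    have hFbds : ∀ B, MeasurableSet B → |Ψ F B| ≤ c * (ρ B).toReal := by
      intro B hB
      have hp := key Fp c hFpi hFp0 hFpc B hB
      have hm := key Fm c hFmi hFm0 hFmc B hB
      have hEq : Ψ Fp B = Ψ F B + Ψ Fm B := by
        have := congrArg (fun s : SignedMeasure Y => s B) hΨsplit
        simpa [VectorMeasure.add_apply] using this
      rw [abs_le]
      constructor <;> linarith [hp.1, hp.2, hm.1, hm.2]
    have hAC : Ψ F ≪ᵥ ρ.toENNRealVectorMeasure := by
      refine VectorMeasure.AbsolutelyContinuous.mk fun B hB h0 => ?_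
      rw [Measure.toENNRealVectorMeasure_apply_measurable hB] at h0
      have := hFbds B hB
      rw [h0] at this
      simp only [ENNReal.toReal_zero, mul_zero] at this
      exact abs_nonpos_iff.mp this
    set D : Y → ℝ := (Ψ F).rnDeriv ρ with hD
    have hdi : Integrable D ρ := SignedMeasure.integrable_rnDeriv _ _
    have hwdD : ρ.withDensityᵥ D = Ψ F := SignedMeasure.withDensityᵥ_rnDeriv_eq _ _ hAC
    have hDint : ∀ B, MeasurableSet B → ∫ y in B, D y ∂ρ = Ψ F B := by
      intro B hB
      rw [← withDensityᵥ_apply hdi hB, hwdD]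
    have hDle : ∀ᵐ y ∂ρ, D y ≤ c := by
      have h := ae_nonneg_of_forall_setIntegral_nonneg ((integrable_const c).sub hdi)
        (fun s hs _ => by
          simp only [Pi.sub_apply]
          rw [integral_sub (integrable_const c).integrableOn hdi.integrableOn,
            setIntegral_const, hDint s hs, smul_eq_mul]
          have := (abs_le.mp (hFbds s hs)).2
          rw [show ρ.real s = (ρ s).toReal from rfl]
          linarith)
      filter_upwards [h] with y hy
      simp only [Pi.zero_apply, Pi.sub_apply] at hy
      linarith
    have hDge : ∀ᵐ y ∂ρ, -c ≤ D y := by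
      have h := ae_nonneg_of_forall_setIntegral_nonneg (hdi.add (integrable_const c))
        (fun s hs _ => by
          simp only [Pi.add_apply]
          rw [integral_add hdi.integrableOn (integrable_const c).integrableOn,
            setIntegral_const, hDint s hs, smul_eq_mul]
          have := (abs_le.mp (hFbds s hs)).1
          rw [show ρ.real s = (ρ s).toReal from rfl]
          linarith)
      filter_upwards [h] with y hy
      simp only [Pi.zero_apply, Pi.add_apply] at hy
      linarith
    have hmem : MemLp D ⊤ ρ := by
      refine memLp_top_of_bound hdi.1 c ?_
      filter_upwards [hDle, hDge] with y h1 h2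
      rw [Real.norm_eq_abs, abs_le]
      exact ⟨h2, h1⟩
    refine ⟨hmem.toLp D, ?_⟩
    rw [WithDensityᵥEq.congr_ae (hmem.coeFn_toLp), hwdD]
  choose T0 hT0 using exT
  have ext' : ∀ u v : Lp ℝ ⊤ ρ, ρ.withDensityᵥ (u : Y → ℝ) = ρ.withDensityᵥ (v : Y → ℝ) →
      u = v := fun u v h =>
    Lp.ext (Integrable.ae_eq_of_withDensityᵥ_eq (intρ u) (intρ v) h)
  have Ψadd : ∀ f g : X → ℝ, Integrable f lam → Integrable g lam →
      Ψ (f + g) = Ψ f + Ψ g := fun f g hf hg =>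
    hadd ⟨_, memAC f⟩ ⟨_, memAC g⟩ ⟨_, memAC (f + g)⟩ (withDensityᵥ_add hf hg)
  have Ψsmul : ∀ (r : ℝ) (f : X → ℝ), Ψ (r • f) = r • Ψ f := fun r f =>
    hsmul r ⟨_, memAC f⟩ ⟨_, memAC (r • f)⟩ (withDensityᵥ_smul f r)
  refine ⟨{ toFun := T0
            map_add' := ?_
            map_smul' := ?_ }, ?_, ?_, ?_, ?_⟩
  · intro f g
    apply ext'
    rw [hT0, WithDensityᵥEq.congr_ae (Lp.coeFn_add (T0 f) (T0 g)),
      withDensityᵥ_add (intρ (T0 f)) (intρ (T0 g)), hT0, hT0,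
      Ψcongr _ _ (Lp.coeFn_add f g), Ψadd _ _ (intlam f) (intlam g)]
  · intro r f
    apply ext'
    simp only [RingHom.id_apply]
    rw [hT0, WithDensityᵥEq.congr_ae (Lp.coeFn_smul r (T0 f)),
      withDensityᵥ_smul _ r, hT0, Ψcongr _ _ (Lp.coeFn_smul r f), Ψsmul]
  · -- T 1 = 1
    simp only [LinearMap.coe_mk, AddHom.coe_mk]
    apply ext'
    rw [hT0]
    have h1 : ((indicatorConstLp ⊤ MeasurableSet.univ (measure_ne_top lam _) (1:ℝ) : Lp ℝ ⊤ lam)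
        : X → ℝ) =ᵐ[lam] fun _ => (1:ℝ) := by
      filter_upwards [indicatorConstLp_coeFn
        (p := ⊤) (hs := MeasurableSet.univ) (hμs := measure_ne_top lam Set.univ)
        (c := (1:ℝ))] with x hx
      simpa using hx
    have h2 : ((indicatorConstLp ⊤ MeasurableSet.univ (measure_ne_top ρ _) (1:ℝ) : Lp ℝ ⊤ ρ)
        : Y → ℝ) =ᵐ[ρ] fun _ => (1:ℝ) := by
      filter_upwards [indicatorConstLp_coeFn
        (p := ⊤) (hs := MeasurableSet.univ) (hμs := measure_ne_top ρ Set.univ)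
        (c := (1:ℝ))] with y hy
      simpa using hy
    rw [Ψcongr _ _ h1, Ψone, WithDensityᵥEq.congr_ae h2, wd_one]
  · -- positivity
    intro f hf
    simp only [LinearMap.coe_mk, AddHom.coe_mk]
    have hΨf : (0 : SignedMeasure Y) ≤ Ψ (f : X → ℝ) := Ψpos _ (intlam f) hf
    refine ae_nonneg_of_forall_setIntegral_nonneg (intρ (T0 f)) fun s hs _ => ?_
    rw [← withDensityᵥ_apply (intρ (T0 f)) hs, hT0]
    have := VectorMeasure.le_iff.mp hΨf s hs
    simpa [VectorMeasure.zero_apply] using this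
  · -- integral preserving
    intro f
    simp only [LinearMap.coe_mk, AddHom.coe_mk]
    have h1 : ∫ y, (T0 f : Y → ℝ) y ∂ρ = Ψ (f : X → ℝ) Set.univ := by
      rw [← setIntegral_univ, ← withDensityᵥ_apply (intρ (T0 f)) MeasurableSet.univ, hT0]
    have h2 := hpres ⟨_, memAC ((f : X → ℝ))⟩
    rw [h1,
      show Ψ ((f : X → ℝ)) Set.univ
        = (Φ ⟨lam.withDensityᵥ ((f : X → ℝ)), memAC _⟩).1 Set.univ from rfl,
      h2, withDensityᵥ_apply (intlam f) MeasurableSet.univ, setIntegral_univ]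
  · -- the defining property
    intro A hA B hB a ha
    simp only [LinearMap.coe_mk, AddHom.coe_mk]
    set f : Lp ℝ ⊤ lam := indicatorConstLp ⊤ hA (measure_ne_top lam A) (1:ℝ) with hf
    have h1 : ∫ y in B, (T0 f : Y → ℝ) y ∂ρ = Ψ (f : X → ℝ) B := by
      rw [← withDensityᵥ_apply (intρ (T0 f)) hB, hT0]
    have h2 : a = ⟨lam.withDensityᵥ ((f : X → ℝ)), memAC _⟩ := by
      apply Subtype.ext
      rw [ha]
      exact WithDensityᵥEq.congr_ae (indicatorConstLp_coeFn).symm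
    rw [h1, h2]
end

section
/- Let X and Y be locally compact Polish spaces, and let Φ be a map from finite signed Borel measures on X to finite signed Borel measures on Y that is linear, bounded with respect to the total variation norms (with operator norm ‖Φ‖), and weakly continuous (if λ_n converges weakly to λ then Φλ_n converges weakly to Φλ). Then there exists a linear operator S : C_b(Y) → C_b(X) such that ∫_X S(g) dλ = ∫_Y g d(Φλ) for all g ∈ C_b(Y) and all finite signed Borel measures λ on X; moreover S is bounded with operator norm ‖S‖ = ‖Φ‖ (with respect to the uniform norms), and S is bounded-pointwise continuous: if g_n → g pointwise on Y with sup_n ‖g_n‖_∞ < ∞, then S(g_n) → S(g) pointwise on X with sup_n ‖S(g_n)‖_∞ < ∞. -/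
open MeasureTheory Filter Topology

/-- integral of a function against a finite signed measure (via the Jordan decomposition) -/
noncomputable def sint {Z : Type*} [MeasurableSpace Z] (s : SignedMeasure Z) (f : Z → ℝ) : ℝ :=
  ∫ z, f z ∂s.toJordanDecomposition.posPart - ∫ z, f z ∂s.toJordanDecomposition.negPart

section SintLemmas

set_option linter.unusedSectionVars false

variable {Z : Type*} [MeasurableSpace Z] [TopologicalSpace Z] [OpensMeasurableSpace Z]

lemma sint_def (s : SignedMeasure Z) (f : Z → ℝ) :
    sint s f = ∫ z, f z ∂s.toJordanDecomposition.posPart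
      - ∫ z, f z ∂s.toJordanDecomposition.negPart := rfl

lemma jd_decomp (s : SignedMeasure Z) :
    s.toJordanDecomposition.posPart.toSignedMeasure
      - s.toJordanDecomposition.negPart.toSignedMeasure = s := by
  rw [← MeasureTheory.JordanDecomposition.toSignedMeasure]
  exact s.toSignedMeasure_toJordanDecomposition

lemma sint_measure_sub (μ ν : Measure Z) [IsFiniteMeasure μ] [IsFiniteMeasure ν]
    (f : BoundedContinuousFunction Z ℝ) :
    sint (μ.toSignedMeasure - ν.toSignedMeasure) f = (∫ z, f z ∂μ) - ∫ z, f z ∂ν := by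
  set s := μ.toSignedMeasure - ν.toSignedMeasure with hs
  set p := s.toJordanDecomposition.posPart
  set n := s.toJordanDecomposition.negPart
  have hpn : p.toSignedMeasure - n.toSignedMeasure = s := jd_decomp s
  have key : μ + n = p + ν := by
    rw [← Measure.toSignedMeasure_eq_toSignedMeasure_iff,
      Measure.toSignedMeasure_add, Measure.toSignedMeasure_add]
    have h2 := hpn.trans hs
    linear_combination (norm := abel) -h2
  have h1 : (∫ z, f z ∂μ) + ∫ z, f z ∂n = (∫ z, f z ∂p) + ∫ z, f z ∂ν := by
    rw [← integral_add_measure (f.integrable μ) (f.integrable n),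
        ← integral_add_measure (f.integrable p) (f.integrable ν), key]
  simp only [sint]
  linarith

lemma sint_measure (μ : Measure Z) [IsFiniteMeasure μ] (f : BoundedContinuousFunction Z ℝ) :
    sint μ.toSignedMeasure f = ∫ z, f z ∂μ := by
  have := sint_measure_sub μ 0 f
  simpa using this

lemma sint_add (s t : SignedMeasure Z) (f : BoundedContinuousFunction Z ℝ) :
    sint (s + t) f = sint s f + sint t f := by
  have hs := jd_decomp s
  have ht := jd_decomp t
  have hst : s + t
      = (s.toJordanDecomposition.posPart + t.toJordanDecomposition.posPart).toSignedMeasure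
      - (s.toJordanDecomposition.negPart + t.toJordanDecomposition.negPart).toSignedMeasure := by
    rw [Measure.toSignedMeasure_add, Measure.toSignedMeasure_add]
    linear_combination (norm := abel) -hs - ht
  rw [hst, sint_measure_sub,
    integral_add_measure (f.integrable _) (f.integrable _),
    integral_add_measure (f.integrable _) (f.integrable _), sint_def, sint_def]
  ring

lemma sint_zero (f : BoundedContinuousFunction Z ℝ) : sint (0 : SignedMeasure Z) f = 0 := by
  have := sint_measure (0 : Measure Z) f
  simpa using this

lemma sint_neg (s : SignedMeasure Z) (f : BoundedContinuousFunction Z ℝ) :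
    sint (-s) f = - sint s f := by
  have hs := jd_decomp s
  have h : -s = s.toJordanDecomposition.negPart.toSignedMeasure
      - s.toJordanDecomposition.posPart.toSignedMeasure := by
    linear_combination (norm := module) hs
  rw [h, sint_measure_sub, sint_def]
  ring

lemma sint_smul_nneg (r : ℝ) (hr : 0 ≤ r) (s : SignedMeasure Z)
    (f : BoundedContinuousFunction Z ℝ) :
    sint (r • s) f = r * sint s f := by
  have hs := jd_decomp s
  have h : r • s = (r.toNNReal • s.toJordanDecomposition.posPart).toSignedMeasure
      - (r.toNNReal • s.toJordanDecomposition.negPart).toSignedMeasure := by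
    rw [Measure.toSignedMeasure_smul, Measure.toSignedMeasure_smul, NNReal.smul_def, NNReal.smul_def,
      Real.coe_toNNReal _ hr]
    conv_lhs => rw [← hs]
    exact smul_sub _ _ _
  rw [h, sint_measure_sub, integral_smul_nnreal_measure, integral_smul_nnreal_measure,
    sint_def]
  simp only [NNReal.smul_def, Real.coe_toNNReal _ hr, smul_eq_mul]
  ring

lemma sint_smul (r : ℝ) (s : SignedMeasure Z) (f : BoundedContinuousFunction Z ℝ) :
    sint (r • s) f = r * sint s f := by
  rcases le_or_gt 0 r with hr | hr
  · exact sint_smul_nneg r hr s f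
  · have : r • s = -((-r) • s) := by rw [show (-r) • s = -(r • s) from neg_smul r s, neg_neg]
    rw [this, sint_neg, sint_smul_nneg (-r) (by linarith) s f]
    ring

lemma sint_sub (s t : SignedMeasure Z) (f : BoundedContinuousFunction Z ℝ) :
    sint (s - t) f = sint s f - sint t f := by
  rw [sub_eq_add_neg, sint_add, sint_neg]; ring

lemma sint_sum {ι : Type*} (A : Finset ι) (m : ι → SignedMeasure Z)
    (f : BoundedContinuousFunction Z ℝ) :
    sint (∑ i ∈ A, m i) f = ∑ i ∈ A, sint (m i) f := by
  classical
  induction A using Finset.induction with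
  | empty => simpa using sint_zero f
  | insert x A hx ih => rw [Finset.sum_insert hx, Finset.sum_insert hx, sint_add, ih]

lemma tv_def (s : SignedMeasure Z) :
    tv s = (s.toJordanDecomposition.posPart Set.univ).toReal
      + (s.toJordanDecomposition.negPart Set.univ).toReal := by
  rw [tv, SignedMeasure.totalVariation, Measure.add_apply,
    ENNReal.toReal_add (measure_ne_top _ _) (measure_ne_top _ _)]

lemma tv_nonneg (s : SignedMeasure Z) : 0 ≤ tv s := ENNReal.toReal_nonneg

lemma abs_sint_le (s : SignedMeasure Z) (f : BoundedContinuousFunction Z ℝ) :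
    |sint s f| ≤ ‖f‖ * tv s := by
  rw [sint_def, tv_def]
  have h1 := BoundedContinuousFunction.norm_integral_le_mul_norm
    s.toJordanDecomposition.posPart f
  have h2 := BoundedContinuousFunction.norm_integral_le_mul_norm
    s.toJordanDecomposition.negPart f
  simp only [Real.norm_eq_abs, measureReal_def] at h1 h2
  have h3 := abs_sub (∫ z, f z ∂s.toJordanDecomposition.posPart)
    (∫ z, f z ∂s.toJordanDecomposition.negPart)
  nlinarith [h3, h1, h2]

def jdOf (μ : Measure Z) [IsFiniteMeasure μ] : JordanDecomposition Z :=
  { posPart := μ, negPart := 0, mutuallySingular := Measure.MutuallySingular.zero_right }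

lemma jd_of_measure (μ : Measure Z) [IsFiniteMeasure μ] :
    μ.toSignedMeasure.toJordanDecomposition = jdOf μ := by
  rw [show μ.toSignedMeasure = (jdOf μ).toSignedMeasure by
    simp [JordanDecomposition.toSignedMeasure, jdOf]]
  exact JordanDecomposition.toJordanDecomposition_toSignedMeasure _

lemma tv_measure (μ : Measure Z) [IsFiniteMeasure μ] :
    tv μ.toSignedMeasure = (μ Set.univ).toReal := by
  rw [tv_def, jd_of_measure]
  simp [jdOf]

end SintLemmas

section Part2
set_option linter.unusedSectionVars false

variable {Z : Type*} [MeasurableSpace Z] [TopologicalSpace Z] [OpensMeasurableSpace Z]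

lemma sint_dirac' [MeasurableSingletonClass Z] (x : Z) (f : BoundedContinuousFunction Z ℝ) :
    sint (Measure.dirac x).toSignedMeasure f = f x := by
  rw [sint_measure]
  exact integral_dirac _ x

lemma tv_dirac' (x : Z) : tv (Measure.dirac x).toSignedMeasure = 1 := by
  rw [tv_measure]
  simp

lemma sint_fun_add (s : SignedMeasure Z) (f g : BoundedContinuousFunction Z ℝ) :
    sint s ⇑(f + g) = sint s f + sint s g := by
  simp only [sint_def, BoundedContinuousFunction.coe_add, Pi.add_apply]
  rw [integral_add (f.integrable _) (g.integrable _), integral_add (f.integrable _) (g.integrable _)]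
  ring

lemma sint_fun_smul (s : SignedMeasure Z) (r : ℝ) (f : BoundedContinuousFunction Z ℝ) :
    sint s ⇑(r • f) = r * sint s f := by
  simp only [sint_def, BoundedContinuousFunction.coe_smul, Pi.smul_apply, smul_eq_mul]
  rw [integral_const_mul, integral_const_mul]
  ring

/-- duality: the total variation is approximated by integrals of functions of norm at most 1 -/
lemma tv_le_sint {Z : Type*} [MetricSpace Z] [TopologicalSpace.SeparableSpace Z]
    [LocallyCompactSpace Z] [MeasurableSpace Z] [BorelSpace Z]
    (s : SignedMeasure Z) {ε : ℝ} (hε : 0 < ε) :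
    ∃ g : BoundedContinuousFunction Z ℝ, ‖g‖ ≤ 1 ∧ tv s - ε ≤ sint s g := by
  have : SecondCountableTopology Z := UniformSpace.secondCountable_of_separable Z
  set p := s.toJordanDecomposition.posPart with hp
  set n := s.toJordanDecomposition.negPart with hn
  obtain ⟨A, hA, hpA, hnA⟩ := s.toJordanDecomposition.mutuallySingular
  -- p A = 0, n Aᶜ = 0
  have hε4 : (0:ℝ) < ε / 4 := by linarith
  have hne : ENNReal.ofReal (ε / 4) ≠ 0 := by
    simp [ENNReal.ofReal_eq_zero, not_le, hε4]
  obtain ⟨Kp, hKpA, hKpc, hKp⟩ := hA.compl.exists_isCompact_lt_add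
    (measure_ne_top p _) hne
  obtain ⟨Kn, hKnA, hKnc, hKn⟩ := hA.exists_isCompact_lt_add
    (measure_ne_top n _) hne
  have hdisj : Disjoint Kn Kp := Set.disjoint_of_subset hKnA hKpA disjoint_compl_right
  obtain ⟨h, hh0, hh1, hh01⟩ := exists_continuous_zero_one_of_isClosed
    hKnc.isClosed hKpc.isClosed hdisj
  set g0 : Z → ℝ := fun z => 2 * h z - 1 with hg0
  have hg0c : Continuous g0 := by continuity
  have hg0b : ∀ z, ‖g0 z‖ ≤ 1 := by
    intro z
    have := hh01 z
    simp only [Set.mem_Icc] at this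
    rw [Real.norm_eq_abs, abs_le]
    constructor <;> simp only [hg0] <;> nlinarith [this.1, this.2]
  set g := BoundedContinuousFunction.ofNormedAddCommGroup g0 hg0c 1 hg0b with hgdef
  have hgnorm : ‖g‖ ≤ 1 :=
    BoundedContinuousFunction.norm_ofNormedAddCommGroup_le hg0c zero_le_one hg0b
  refine ⟨g, hgnorm, ?_⟩
  -- measure estimates
  have hpuniv : p Set.univ = p Aᶜ := by
    have := measure_add_measure_compl hA (μ := p)
    rw [hpA, zero_add] at this
    exact this.symm
  have hnuniv : n Set.univ = n A := by
    have := measure_add_measure_compl hA.compl (μ := n)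
    rw [compl_compl] at this
    rw [hnA, zero_add] at this
    exact this.symm
  -- real versions
  have hKpcompl : (p Kpᶜ).toReal ≤ ε / 4 := by
    have h1 : p Kpᶜ ≤ ENNReal.ofReal (ε / 4) := by
      have h2 : p Kpᶜ = p Set.univ - p Kp := by
        rw [measure_compl hKpc.isClosed.measurableSet (measure_ne_top p Kp)]
      rw [h2, hpuniv]
      exact tsub_le_iff_right.2 (le_of_lt (by rw [add_comm]; exact hKp))
    calc (p Kpᶜ).toReal ≤ (ENNReal.ofReal (ε/4)).toReal :=
          ENNReal.toReal_mono ENNReal.ofReal_ne_top h1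
      _ = ε / 4 := ENNReal.toReal_ofReal (le_of_lt hε4)
  have hKncompl : (n Knᶜ).toReal ≤ ε / 4 := by
    have h1 : n Knᶜ ≤ ENNReal.ofReal (ε / 4) := by
      have h2 : n Knᶜ = n Set.univ - n Kn := by
        rw [measure_compl hKnc.isClosed.measurableSet (measure_ne_top n Kn)]
      rw [h2, hnuniv]
      exact tsub_le_iff_right.2 (le_of_lt (by rw [add_comm]; exact hKn))
    calc (n Knᶜ).toReal ≤ (ENNReal.ofReal (ε/4)).toReal :=
          ENNReal.toReal_mono ENNReal.ofReal_ne_top h1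
      _ = ε / 4 := ENNReal.toReal_ofReal (le_of_lt hε4)
  have hKpKp : (p Set.univ).toReal = (p Kp).toReal + (p Kpᶜ).toReal := by
    rw [← ENNReal.toReal_add (measure_ne_top _ _) (measure_ne_top _ _),
      measure_add_measure_compl hKpc.isClosed.measurableSet]
  have hKnKn : (n Set.univ).toReal = (n Kn).toReal + (n Knᶜ).toReal := by
    rw [← ENNReal.toReal_add (measure_ne_top _ _) (measure_ne_top _ _),
      measure_add_measure_compl hKnc.isClosed.measurableSet]
  -- integral estimates
  have hgint : ∀ (μ : Measure Z) [IsFiniteMeasure μ], ∀ (φ : BoundedContinuousFunction Z ℝ),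
      (∀ z, ‖φ z‖ ≤ 1) → ∀ K : Set Z, MeasurableSet K →
      (∀ z ∈ K, φ z = (1:ℝ)) → (μ K).toReal - (μ Kᶜ).toReal ≤ ∫ z, φ z ∂μ := by
    intro μ _ φ hφb K hKm hφK
    rw [← integral_add_compl hKm (φ.integrable μ)]
    have h1 : ∫ z in K, φ z ∂μ = (μ K).toReal := by
      rw [setIntegral_congr_fun hKm hφK, setIntegral_const, smul_eq_mul, mul_one, measureReal_def]
    have h2 : |∫ z in Kᶜ, φ z ∂μ| ≤ (μ Kᶜ).toReal := by
      have h2' := norm_setIntegral_le_of_norm_le_const (μ := μ) (s := Kᶜ) (f := fun z => φ z)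
        (measure_lt_top μ _) (fun z _ => hφb z)
      rw [Real.norm_eq_abs, measureReal_def] at h2'
      simpa using h2'
    have := abs_le.1 h2
    linarith
  have hInt1 : (p Kp).toReal - (p Kpᶜ).toReal ≤ ∫ z, g z ∂p := by
    refine hgint p g (fun z => by simpa [hgdef] using hg0b z) Kp
      hKpc.isClosed.measurableSet (fun z hz => ?_)
    have h1z : h z = 1 := hh1 hz
    show g0 z = 1
    norm_num [hg0, h1z]
  have hInt2 : (n Kn).toReal - (n Knᶜ).toReal ≤ ∫ z, (-g) z ∂n := by
    refine hgint n (-g) (fun z => by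
        simp only [BoundedContinuousFunction.coe_neg, Pi.neg_apply, norm_neg]
        simpa [hgdef] using hg0b z) Kn
      hKnc.isClosed.measurableSet (fun z hz => ?_)
    have h0z : h z = 0 := hh0 hz
    show -(g0 z) = 1
    norm_num [hg0, h0z]
  have hInt2' : ∫ z, g z ∂n ≤ (n Knᶜ).toReal - (n Kn).toReal := by
    have : ∫ z, (-g) z ∂n = - ∫ z, g z ∂n := by
      simp only [BoundedContinuousFunction.coe_neg, Pi.neg_apply]
      exact integral_neg _
    rw [this] at hInt2
    linarith
  have hsint : sint s g = (∫ z, g z ∂p) - ∫ z, g z ∂n := rfl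
  have htv : tv s = (p Set.univ).toReal + (n Set.univ).toReal := tv_def s
  linarith
end Part2

section Approx
set_option linter.unusedSectionVars false

/-- every finite measure on a Polish space is the weak limit of finite combinations of diracs -/
lemma measure_approx {W : Type*} [MetricSpace W] [CompleteSpace W]
    [TopologicalSpace.SeparableSpace W] [LocallyCompactSpace W]
    [MeasurableSpace W] [BorelSpace W] [Nonempty W]
    (μ : Measure W) [IsFiniteMeasure μ] :
    ∃ ν : ℕ → SignedMeasure W,
      (∀ k, ∃ (m : ℕ) (a : ℕ → ℝ) (c : ℕ → W),
        ν k = ∑ i ∈ Finset.range m, a i • (Measure.dirac (c i)).toSignedMeasure) ∧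
      (∀ f : BoundedContinuousFunction W ℝ,
        Tendsto (fun k => sint (ν k) f) atTop (nhds (sint μ.toSignedMeasure f))) := by
  have : SecondCountableTopology W := UniformSpace.secondCountable_of_separable W
  classical
  obtain ⟨u, hu⟩ := TopologicalSpace.exists_dense_seq W
  -- inner compacts
  have hCex : ∀ k : ℕ, ∃ K : Set W, K ⊆ Set.univ ∧ IsCompact K ∧
      μ Set.univ < μ K + (((k+1 : ℕ) : ENNReal))⁻¹ := fun k =>
    MeasurableSet.univ.exists_isCompact_lt_add (measure_ne_top μ _) (by simp)
  choose C hC1 hCc hCμ using hCex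
  set K : ℕ → Set W := fun k => ⋃ j ∈ Set.Iic k, C j with hKdef
  have hKc : ∀ k, IsCompact (K k) :=
    fun k => (Set.finite_Iic k).isCompact_biUnion (fun j _ => hCc j)
  have hKmono : Monotone K := fun a b hab =>
    Set.biUnion_subset_biUnion_left (Set.Iic_subset_Iic.2 hab)
  have hKcompl : ∀ k, μ (K k)ᶜ ≤ (((k+1:ℕ)) : ENNReal)⁻¹ := by
    intro k
    have hsub : C k ⊆ K k := Set.subset_biUnion_of_mem (Set.mem_Iic.2 le_rfl)
    have h1 : μ (K k)ᶜ ≤ μ (C k)ᶜ := measure_mono (Set.compl_subset_compl.2 hsub)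
    have h2 : μ (C k)ᶜ ≤ (((k+1:ℕ)) : ENNReal)⁻¹ := by
      rw [measure_compl (hCc k).isClosed.measurableSet (measure_ne_top μ _)]
      exact tsub_le_iff_right.2 (le_of_lt (by rw [add_comm]; exact hCμ k))
    exact h1.trans h2
  -- balls
  set r : ℕ → ℝ := fun k => 1 / (k+1) with hrdef
  have hr : ∀ k, 0 < r k := fun k => by positivity
  set B : ℕ → ℕ → Set W := fun k i => Metric.ball (u i) (r k) with hBdef
  have hB : ∀ k x, ∃ i, x ∈ B k i := by
    intro k x
    obtain ⟨i, hi⟩ := hu.exists_dist_lt x (hr k)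
    exact ⟨i, by simpa [hBdef, Metric.mem_ball] using hi⟩
  -- finite subcovers
  have hm : ∀ k, ∃ m, K k ⊆ ⋃ i ∈ Finset.range m, B k i := by
    intro k
    obtain ⟨t, ht⟩ := (hKc k).elim_finite_subcover (B k)
      (fun i => Metric.isOpen_ball) (fun x _ => Set.mem_iUnion.2 (hB k x))
    refine ⟨t.sup id + 1, ht.trans ?_⟩
    intro x hx
    rw [Set.mem_iUnion₂] at hx ⊢
    obtain ⟨i, hit, hxi⟩ := hx
    exact ⟨i, Finset.mem_range.2 (Nat.lt_succ_of_le (Finset.le_sup (f := id) hit)), hxi⟩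
  choose m hmcov using hm
  set D : ℕ → ℕ → Set W := fun k => disjointed (B k) with hDdef
  have hDmeas : ∀ k i, MeasurableSet (D k i) :=
    fun k i => MeasurableSet.disjointed (fun j => Metric.isOpen_ball.measurableSet) i
  have hDdisj : ∀ k, Pairwise (Function.onFun Disjoint (D k)) := fun k => disjoint_disjointed _
  set A : ℕ → ℕ → Set W := fun k i => D k i ∩ K k with hAdef
  have hAmeas : ∀ k i, MeasurableSet (A k i) :=
    fun k i => (hDmeas k i).inter (hKc k).isClosed.measurableSet
  set ν : ℕ → SignedMeasure W := fun k =>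
    ∑ i ∈ Finset.range (m k), ((μ (A k i)).toReal) • (Measure.dirac (u i)).toSignedMeasure
    with hνdef
  refine ⟨ν, fun k => ⟨m k, _, u, rfl⟩, ?_⟩
  intro f
  set g : ℕ → W → ℝ := fun k x =>
    ∑ i ∈ Finset.range (m k), Set.indicator (A k i) (fun _ => f (u i)) x with hgdef
  have hsintν : ∀ k, sint (ν k) f = ∫ x, g k x ∂μ := by
    intro k
    rw [hνdef, sint_sum, hgdef]
    rw [integral_finset_sum _ (fun i _ => (integrable_const (f (u i))).indicator (hAmeas k i))]
    refine Finset.sum_congr rfl (fun i _ => ?_)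
    rw [sint_smul, sint_dirac', integral_indicator_const _ (hAmeas k i), measureReal_def, smul_eq_mul, mul_comm]
  have hgmeas : ∀ k, Measurable (g k) := by
    intro k
    exact Finset.measurable_sum _ (fun i _ => measurable_const.indicator (hAmeas k i))
  have heval : ∀ k x i, i ∈ Finset.range (m k) → x ∈ A k i → g k x = f (u i) := by
    intro k x i hi hxi
    show ∑ j ∈ Finset.range (m k), Set.indicator (A k j) (fun _ => f (u j)) x = f (u i)
    have hzero : ∀ j ∈ Finset.range (m k), j ≠ i →
        Set.indicator (A k j) (fun _ => f (u j)) x = 0 := by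
      intro j _ hji
      refine Set.indicator_of_notMem (fun hxj => ?_) _
      have hdisjij := hDdisj k hji
      have : x ∈ D k j ∩ D k i := ⟨hxj.1, hxi.1⟩
      rw [Set.disjoint_iff_inter_eq_empty.1 hdisjij] at this
      exact this
    rw [Finset.sum_eq_single_of_mem i hi hzero, Set.indicator_of_mem hxi]
  have hgb : ∀ k x, ‖g k x‖ ≤ ‖f‖ := by
    intro k x
    by_cases hx : ∃ i ∈ Finset.range (m k), x ∈ A k i
    · obtain ⟨i, hi, hxi⟩ := hx
      rw [heval k x i hi hxi]
      exact f.norm_coe_le_norm (u i)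
    · push_neg at hx
      have : g k x = 0 :=
        Finset.sum_eq_zero (fun j hj => Set.indicator_of_notMem (hx j hj) _)
      rw [this, norm_zero]
      exact norm_nonneg f
  -- a.e. membership in the union of the compacts
  have haemem : ∀ᵐ x ∂μ, x ∈ ⋃ j, K j := by
    rw [MeasureTheory.ae_iff]
    have hEset : {x | x ∉ ⋃ j, K j} = ⋂ j, (K j)ᶜ := by
      ext x; simp
    rw [hEset]
    refine le_antisymm ?_ (zero_le')
    have htend : Tendsto (fun k : ℕ => (((k+1:ℕ)) : ENNReal)⁻¹) atTop (nhds 0) :=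
      ENNReal.tendsto_inv_nat_nhds_zero.comp (tendsto_add_atTop_nat 1)
    refine ge_of_tendsto' htend (fun k => ?_)
    exact (measure_mono (Set.iInter_subset _ k)).trans (hKcompl k)
  -- pointwise convergence on the union
  have hptconv : ∀ x ∈ ⋃ j, K j, Tendsto (fun k => g k x) atTop (nhds (f x)) := by
    intro x hx
    obtain ⟨k0, hk0⟩ := Set.mem_iUnion.1 hx
    rw [Metric.tendsto_atTop]
    intro ε hε
    obtain ⟨δ, hδ, hδf⟩ := Metric.continuousAt_iff.1 (f.continuous.continuousAt (x := x)) ε hε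
    obtain ⟨N, hN⟩ := exists_nat_one_div_lt (K := ℝ) hδ
    refine ⟨max k0 N, fun k hk => ?_⟩
    have hxK : x ∈ K k := hKmono (le_trans (le_max_left _ _) hk) hk0
    set i := Nat.find (hB k x) with hidef
    have hxD : x ∈ D k i := by
      have hpre := preimage_find_eq_disjointed (B k) (hB k) i
      show x ∈ disjointed (B k) i
      rw [← hpre]
      exact rfl
    have him : i ∈ Finset.range (m k) := by
      obtain ⟨j, hj, hxj⟩ := Set.mem_iUnion₂.1 (hmcov k hxK)
      exact Finset.mem_range.2 (lt_of_le_of_lt (Nat.find_min' (hB k x) hxj)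
        (Finset.mem_range.1 hj))
    have hgx : g k x = f (u i) := heval k x i him ⟨hxD, hxK⟩
    have hdist : dist x (u i) < δ := by
      have h1 : x ∈ B k i := disjointed_subset (B k) i hxD
      have h2 : dist x (u i) < r k := Metric.mem_ball.1 h1
      have h3 : r k ≤ 1 / (N + 1 : ℝ) := by
        rw [hrdef]
        have hkN : (N:ℝ) + 1 ≤ (k:ℝ) + 1 := by
          have := le_trans (le_max_right k0 N) hk
          exact_mod_cast by omega
        apply div_le_div_of_nonneg_left one_pos.le (by positivity) hkN
      linarith
    have := hδf (by rwa [dist_comm] at hdist)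
    rw [hgx, Real.dist_eq]
    rw [Real.dist_eq] at this
    exact this
  -- dominated convergence
  have hdom := tendsto_integral_of_dominated_convergence (F := g) (f := ⇑f)
    (bound := fun _ => ‖f‖) (μ := μ)
    (fun k => (hgmeas k).aestronglyMeasurable)
    (integrable_const _)
    (fun k => Eventually.of_forall (fun x => hgb k x))
    (haemem.mono (fun x hx => hptconv x hx))
  rw [sint_measure]
  have : (fun k => sint (ν k) f) = fun k => ∫ x, g k x ∂μ := funext hsintν
  rw [this]
  exact hdom

end Approx


/-- Let `X`, `Y` be locally compact Polish spaces and let `Φ` be a linear,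
total-variation bounded and weakly continuous map on finite signed Borel measures.  Then `Φ`
has a linear Radon adjoint `S : C_b(Y) → C_b(X)`, with equal operator norm (expressed by the
equality of the sets of admissible bounds), and `S` is bounded-pointwise continuous. -/
theorem stmt7 {X Y : Type*}
    [MetricSpace X] [CompleteSpace X] [TopologicalSpace.SeparableSpace X]
    [LocallyCompactSpace X] [MeasurableSpace X] [BorelSpace X]
    [MetricSpace Y] [CompleteSpace Y] [TopologicalSpace.SeparableSpace Y]
    [LocallyCompactSpace Y] [MeasurableSpace Y] [BorelSpace Y]
    (Φ : SignedMeasure X → SignedMeasure Y)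
    (hadd : ∀ s t : SignedMeasure X, Φ (s + t) = Φ s + Φ t)
    (hsmul : ∀ (r : ℝ) (s : SignedMeasure X), Φ (r • s) = r • Φ s)
    (hbdd : ∃ C : ℝ, ∀ s : SignedMeasure X, tv (Φ s) ≤ C * tv s)
    (hwc : ∀ (lams : ℕ → SignedMeasure X) (lam : SignedMeasure X),
      (∀ f : BoundedContinuousFunction X ℝ,
        Tendsto (fun n => sint (lams n) f) atTop (nhds (sint lam f))) →
      ∀ g : BoundedContinuousFunction Y ℝ,
        Tendsto (fun n => sint (Φ (lams n)) g) atTop (nhds (sint (Φ lam) g))) :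
    ∃ S : BoundedContinuousFunction Y ℝ →ₗ[ℝ] BoundedContinuousFunction X ℝ,
      -- S is the Radon adjoint of Φ
      (∀ (g : BoundedContinuousFunction Y ℝ) (lam : SignedMeasure X),
        sint lam (S g) = sint (Φ lam) g) ∧
      -- ‖S‖ = ‖Φ‖: a constant bounds Φ iff it bounds S
      (∀ C : ℝ, 0 ≤ C →
        ((∀ lam : SignedMeasure X, tv (Φ lam) ≤ C * tv lam) ↔
          ∀ g : BoundedContinuousFunction Y ℝ, ‖S g‖ ≤ C * ‖g‖)) ∧
      -- S is bounded-pointwise continuous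
      (∀ (gs : ℕ → BoundedContinuousFunction Y ℝ) (g : BoundedContinuousFunction Y ℝ),
        (∀ y : Y, Tendsto (fun n => gs n y) atTop (nhds (g y))) →
        (∃ M : ℝ, ∀ n, ‖gs n‖ ≤ M) →
        (∀ x : X, Tendsto (fun n => S (gs n) x) atTop (nhds (S g x))) ∧
          ∃ M : ℝ, ∀ n, ‖S (gs n)‖ ≤ M) := by

  classical
  obtain ⟨C₀, hC₀⟩ := hbdd
  set C := max C₀ 0 with hCdef
  have hCnn : 0 ≤ C := le_max_right _ _
  have hC : ∀ s, tv (Φ s) ≤ C * tv s := fun s =>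
    (hC₀ s).trans (mul_le_mul_of_nonneg_right (le_max_left _ _) (tv_nonneg s))
  have hΦ0 : Φ 0 = 0 := by
    have := hsmul 0 0
    simpa using this
  have hΦsub : ∀ s t, Φ (s - t) = Φ s - Φ t := by
    intro s t
    have h1 : Φ (s - t) + Φ t = Φ s := by
      rw [← hadd, sub_add_cancel]
    linear_combination (norm := abel) h1
  have hΦsum : ∀ (n : ℕ) (ms : ℕ → SignedMeasure X),
      Φ (∑ i ∈ Finset.range n, ms i) = ∑ i ∈ Finset.range n, Φ (ms i) := by
    intro n ms
    induction n with
    | zero => simpa using hΦ0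
    | succ n ih => rw [Finset.sum_range_succ, Finset.sum_range_succ, hadd, ih]
  set δ : X → SignedMeasure X := fun x => (Measure.dirac x).toSignedMeasure with hδdef
  set T : BoundedContinuousFunction Y ℝ → X → ℝ := fun g x => sint (Φ (δ x)) g with hTdef
  have hTbound : ∀ g x, ‖T g x‖ ≤ C * ‖g‖ := by
    intro g x
    rw [Real.norm_eq_abs]
    calc |T g x| ≤ ‖g‖ * tv (Φ (δ x)) := abs_sint_le _ _
      _ ≤ ‖g‖ * (C * tv (δ x)) :=
          mul_le_mul_of_nonneg_left (hC _) (norm_nonneg g)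
      _ = C * ‖g‖ := by rw [hδdef, tv_dirac']; ring
  have hdel : ∀ (xs : ℕ → X) (x : X), Tendsto xs atTop (nhds x) →
      ∀ f : BoundedContinuousFunction X ℝ,
        Tendsto (fun n => sint (δ (xs n)) f) atTop (nhds (sint (δ x) f)) := by
    intro xs x hxs f
    simp only [hδdef, sint_dirac']
    exact (f.continuous.tendsto x).comp hxs
  have hTcont : ∀ g, Continuous (T g) := by
    intro g
    apply continuous_iff_seqContinuous.2
    intro xs x hxs
    exact hwc (fun n => δ (xs n)) (δ x) (hdel xs x hxs) g
  set Sf : BoundedContinuousFunction Y ℝ → BoundedContinuousFunction X ℝ := fun g =>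
    BoundedContinuousFunction.ofNormedAddCommGroup (T g) (hTcont g) (C * ‖g‖) (hTbound g)
    with hSfdef
  have hSfapp : ∀ g x, Sf g x = sint (Φ (δ x)) g := fun g x => rfl
  have hSfnorm : ∀ g, ‖Sf g‖ ≤ C * ‖g‖ := fun g =>
    BoundedContinuousFunction.norm_ofNormedAddCommGroup_le _
      (mul_nonneg hCnn (norm_nonneg g)) _
  set S : BoundedContinuousFunction Y ℝ →ₗ[ℝ] BoundedContinuousFunction X ℝ :=
    { toFun := Sf
      map_add' := by
        intro g g'
        ext x
        simp only [hSfapp, BoundedContinuousFunction.coe_add, Pi.add_apply]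
        exact sint_fun_add _ g g'
      map_smul' := by
        intro r g
        ext x
        simp only [hSfapp, BoundedContinuousFunction.coe_smul, Pi.smul_apply,
          RingHom.id_apply, smul_eq_mul]
        exact sint_fun_smul _ r g } with hSdef
  have hSapp : ∀ g x, S g x = sint (Φ (δ x)) g := fun g x => rfl
  -- the adjoint identity for finite measures
  have hadj_meas : ∀ (μ : Measure X), ∀ _ : IsFiniteMeasure μ,
      ∀ g : BoundedContinuousFunction Y ℝ,
      sint μ.toSignedMeasure (S g) = sint (Φ μ.toSignedMeasure) g := by
    intro μ hfin g
    by_cases hne : Nonempty X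
    · obtain ⟨ν, hνrep, hνconv⟩ := measure_approx μ
      have h1 : ∀ k, sint (ν k) (S g) = sint (Φ (ν k)) g := by
        intro k
        obtain ⟨mk, a, c, hrep⟩ := hνrep k
        have hΦν : Φ (ν k) = ∑ i ∈ Finset.range mk, (a i) • Φ (δ (c i)) := by
          rw [hrep, hΦsum]
          exact Finset.sum_congr rfl (fun i _ => hsmul (a i) _)
        rw [hΦν, hrep, sint_sum, sint_sum]
        refine Finset.sum_congr rfl (fun i _ => ?_)
        rw [sint_smul, sint_smul]
        congr 1
        rw [← hSapp g (c i)]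
        exact sint_dirac' (c i) (S g)
      have h2 := hνconv (S g)
      have h3 := hwc ν μ.toSignedMeasure hνconv g
      simp_rw [h1] at h2
      exact tendsto_nhds_unique h2 h3
    · -- X empty : μ = 0
      rw [not_nonempty_iff] at hne
      have hμ0 : μ = 0 := Subsingleton.elim μ 0
      subst hμ0
      rw [Measure.toSignedMeasure_zero, hΦ0, sint_zero, sint_zero]
  have hadj : ∀ (g : BoundedContinuousFunction Y ℝ) (lam : SignedMeasure X),
      sint lam (S g) = sint (Φ lam) g := by
    intro g lam
    have hjd := jd_decomp lam
    conv_lhs => rw [← hjd]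
    conv_rhs => rw [← hjd]
    rw [sint_sub, hΦsub, sint_sub,
      hadj_meas _ inferInstance g, hadj_meas _ inferInstance g]
  refine ⟨S, hadj, ?_, ?_⟩
  · -- norm equivalence
    intro C' hC'
    constructor
    · intro hb g
      refine (BoundedContinuousFunction.norm_le (mul_nonneg hC' (norm_nonneg g))).2 ?_
      intro x
      rw [hSapp, Real.norm_eq_abs]
      calc |sint (Φ (δ x)) g| ≤ ‖g‖ * tv (Φ (δ x)) := abs_sint_le _ _
        _ ≤ ‖g‖ * (C' * tv (δ x)) :=
            mul_le_mul_of_nonneg_left (hb _) (norm_nonneg g)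
        _ = C' * ‖g‖ := by rw [hδdef, tv_dirac']; ring
    · intro hb lam
      refine le_of_forall_pos_le_add (fun ε hε => ?_)
      obtain ⟨g, hg1, hgs⟩ := tv_le_sint (Φ lam) hε
      have h1 : sint (Φ lam) g = sint lam (S g) := (hadj g lam).symm
      have h2 : |sint lam (S g)| ≤ ‖S g‖ * tv lam := abs_sint_le lam (S g)
      have h3 : ‖S g‖ ≤ C' * ‖g‖ := hb g
      have h4 : ‖S g‖ * tv lam ≤ C' * tv lam := by
        have : ‖S g‖ ≤ C' := h3.trans (by nlinarith [norm_nonneg (S g)])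
        exact mul_le_mul_of_nonneg_right this (tv_nonneg lam)
      have h5 := abs_le.1 h2
      linarith
  · -- bounded pointwise continuity
    intro gs g hpt ⟨M, hM⟩
    constructor
    · intro x
      have hSx : ∀ h : BoundedContinuousFunction Y ℝ, S h x = sint (Φ (δ x)) h := fun h => rfl
      simp_rw [hSx, sint_def]
      set p := (Φ (δ x)).toJordanDecomposition.posPart
      set q := (Φ (δ x)).toJordanDecomposition.negPart
      have hp : Tendsto (fun n => ∫ y, gs n y ∂p) atTop (nhds (∫ y, g y ∂p)) := by
        refine tendsto_integral_of_dominated_convergence (bound := fun _ => M)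
          (fun n => (gs n).continuous.measurable.aestronglyMeasurable)
          (integrable_const _) (fun n => Eventually.of_forall (fun y => ?_))
          (Eventually.of_forall (fun y => hpt y))
        exact ((gs n).norm_coe_le_norm y).trans (hM n)
      have hq : Tendsto (fun n => ∫ y, gs n y ∂q) atTop (nhds (∫ y, g y ∂q)) := by
        refine tendsto_integral_of_dominated_convergence (bound := fun _ => M)
          (fun n => (gs n).continuous.measurable.aestronglyMeasurable)
          (integrable_const _) (fun n => Eventually.of_forall (fun y => ?_))
          (Eventually.of_forall (fun y => hpt y))
        exact ((gs n).norm_coe_le_norm y).trans (hM n)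
      exact hp.sub hq
    · refine ⟨C * M, fun n => (hSfnorm (gs n)).trans ?_⟩
      exact mul_le_mul_of_nonneg_left (hM n) hCnn
end

section
/- Let (X,d) be a locally compact Polish metric space with complete metric d, let c : X × X → [0,∞) be a continuous cost function with c(x,y) ≤ α d(x,y)^p for some constants α, p > 0, and let λ and ρ be finite positive compactly supported Borel measures on X with λ(X) = ρ(X). Then for every ε > 0 there exist finitely supported measures λ' = Σ_{i=1}^m a_i δ_{x_i} and ρ' = Σ_{i=1}^m b_i δ_{x_i} with a_i, b_i ≥ 0 and λ'(X) = ρ'(X) = λ(X), such that |C(λ,ρ) − C(λ',ρ')| < ε, where C(σ,τ) := inf{∫ c dπ : π ∈ Π(σ,τ)} denotes the optimal transport cost. -/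
open MeasureTheory Filter Topology ENNReal

/-- the optimal transport cost `C(σ,τ) = inf {∫ c dπ : π ∈ Π(σ,τ)}` -/
noncomputable def optCost {X : Type*} [MeasurableSpace X]
    (c : X × X → ℝ) (σ τ : Measure X) : ℝ≥0∞ :=
  ⨅ (π : Measure (X × X)) (_ : π.fst = σ ∧ π.snd = τ), ∫⁻ q, ENNReal.ofReal (c q) ∂π

theorem optCost_le {X : Type*} [MeasurableSpace X] (c : X × X → ℝ) {σ τ : Measure X}
    (π : Measure (X × X)) (h1 : π.fst = σ) (h2 : π.snd = τ) :
    optCost c σ τ ≤ ∫⁻ q, ENNReal.ofReal (c q) ∂π :=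
  iInf₂_le π ⟨h1, h2⟩

theorem le_optCost_add {X : Type*} [MeasurableSpace X] (c : X × X → ℝ) {σ τ : Measure X}
    {A k : ℝ≥0∞}
    (h : ∀ π : Measure (X × X), π.fst = σ → π.snd = τ →
      A ≤ (∫⁻ q, ENNReal.ofReal (c q) ∂π) + k) :
    A ≤ optCost c σ τ + k := by
  rw [optCost, ENNReal.iInf_add]
  refine le_iInf fun π => ?_
  rw [ENNReal.iInf_add]
  exact le_iInf fun hπ => h π hπ.1 hπ.2

theorem fst_finset_sum_smul {X Y : Type*} [MeasurableSpace X] [MeasurableSpace Y]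
    {n : ℕ} (w : Fin n → ℝ≥0∞) (μ : Fin n → Measure (X × Y)) :
    (∑ i, w i • μ i).fst = ∑ i, w i • (μ i).fst := by
  ext s hs
  simp [Measure.fst_apply hs, Measure.finset_sum_apply, Measure.smul_apply]

theorem snd_finset_sum_smul {X Y : Type*} [MeasurableSpace X] [MeasurableSpace Y]
    {n : ℕ} (w : Fin n → ℝ≥0∞) (μ : Fin n → Measure (X × Y)) :
    (∑ i, w i • μ i).snd = ∑ i, w i • (μ i).snd := by
  ext s hs
  simp [Measure.snd_apply hs, Measure.finset_sum_apply, Measure.smul_apply]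

theorem fst_finset_sum {X Y ι : Type*} [MeasurableSpace X] [MeasurableSpace Y]
    (s : Finset ι) (μ : ι → Measure (X × Y)) :
    (∑ i ∈ s, μ i).fst = ∑ i ∈ s, (μ i).fst := by
  ext A hA
  simp [Measure.fst_apply hA, Measure.finset_sum_apply]

theorem snd_finset_sum {X Y ι : Type*} [MeasurableSpace X] [MeasurableSpace Y]
    (s : Finset ι) (μ : ι → Measure (X × Y)) :
    (∑ i ∈ s, μ i).snd = ∑ i ∈ s, (μ i).snd := by
  ext A hA
  simp [Measure.snd_apply hA, Measure.finset_sum_apply]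

theorem fst_smul_meas {X Y : Type*} [MeasurableSpace X] [MeasurableSpace Y]
    (w : ℝ≥0∞) (μ : Measure (X × Y)) : (w • μ).fst = w • μ.fst := by
  ext A hA
  simp [Measure.fst_apply hA, Measure.smul_apply]

theorem snd_smul_meas {X Y : Type*} [MeasurableSpace X] [MeasurableSpace Y]
    (w : ℝ≥0∞) (μ : Measure (X × Y)) : (w • μ).snd = w • μ.snd := by
  ext A hA
  simp [Measure.snd_apply hA, Measure.smul_apply]

theorem union_singleton_prod {Y : Type*} {n : ℕ} (x : Fin n → Y) (a : Y) :
    (⋃ j, (({a} : Set Y) ×ˢ ({x j} : Set Y))) = ({a} : Set Y) ×ˢ Set.range x := by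
  ext q
  simp only [Set.mem_iUnion, Set.mem_prod, Set.mem_singleton_iff, Set.mem_range]
  constructor
  · rintro ⟨j, h1, h2⟩
    exact ⟨h1, j, h2.symm⟩
  · rintro ⟨h1, j, h2⟩
    exact ⟨j, h1, h2.symm⟩

theorem union_prod_singleton {Y : Type*} {n : ℕ} (x : Fin n → Y) (b : Y) :
    (⋃ i, (({x i} : Set Y) ×ˢ ({b} : Set Y))) = Set.range x ×ˢ ({b} : Set Y) := by
  ext q
  simp only [Set.mem_iUnion, Set.mem_prod, Set.mem_singleton_iff, Set.mem_range]
  constructor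
  · rintro ⟨i, h1, h2⟩
    exact ⟨⟨i, h1.symm⟩, h2⟩
  · rintro ⟨⟨i, h1⟩, h2⟩
    exact ⟨i, h1.symm, h2⟩

theorem image_pair_coe {Y : Type*} [DecidableEq Y] {n : ℕ} (x : Fin n → Y) :
    ((Finset.image (fun ij : Fin n × Fin n => (x ij.1, x ij.2)) Finset.univ : Finset (Y × Y))
      : Set (Y × Y)) = Set.range x ×ˢ Set.range x := by
  ext q
  simp only [Finset.coe_image, Finset.coe_univ, Set.image_univ, Set.mem_range, Set.mem_prod,
    Set.mem_range, Prod.ext_iff]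
  constructor
  · rintro ⟨⟨i, j⟩, h1, h2⟩
    exact ⟨⟨i, h1⟩, ⟨j, h2⟩⟩
  · rintro ⟨⟨i, h1⟩, ⟨j, h2⟩⟩
    exact ⟨⟨i, j⟩, h1, h2⟩

set_option maxHeartbeats 1000000 in
/-- On a locally compact Polish metric space `X`, for a continuous cost
`c : X × X → [0,∞)` with `c(x,y) ≤ α d(x,y)^p` (`α, p > 0`) and finite positive compactly
supported measures `λ`, `ρ` of equal total mass, the optimal cost `C(λ,ρ)` is approximated
within any `ε > 0` by the optimal cost between finitely supported measures
`λ' = Σ a_i δ_{x_i}`, `ρ' = Σ b_i δ_{x_i}` of the same total mass. -/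
theorem stmt16 {X : Type*}
    [MetricSpace X] [CompleteSpace X] [TopologicalSpace.SeparableSpace X]
    [LocallyCompactSpace X] [MeasurableSpace X] [BorelSpace X]
    (c : X × X → ℝ) (hc : Continuous c) (hc0 : ∀ q, 0 ≤ c q)
    (α p : ℝ) (hα : 0 < α) (hp : 0 < p)
    (hcd : ∀ x y : X, c (x, y) ≤ α * dist x y ^ p)
    (lam ρ : Measure X) [IsFiniteMeasure lam] [IsFiniteMeasure ρ]
    (hlamc : ∃ K : Set X, IsCompact K ∧ lam Kᶜ = 0)
    (hρc : ∃ K : Set X, IsCompact K ∧ ρ Kᶜ = 0)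
    (hmass : lam Set.univ = ρ Set.univ) :
    ∀ ε : ℝ, 0 < ε →
      ∃ (m : ℕ) (x : Fin m → X) (a b : Fin m → ℝ),
        (∀ i, 0 ≤ a i) ∧ (∀ i, 0 ≤ b i) ∧
        (∑ i, ENNReal.ofReal (a i) • Measure.dirac (x i)) Set.univ = lam Set.univ ∧
        (∑ i, ENNReal.ofReal (b i) • Measure.dirac (x i)) Set.univ = lam Set.univ ∧
        optCost c lam ρ <
          optCost c (∑ i, ENNReal.ofReal (a i) • Measure.dirac (x i))
            (∑ i, ENNReal.ofReal (b i) • Measure.dirac (x i)) + ENNReal.ofReal ε ∧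
        optCost c (∑ i, ENNReal.ofReal (a i) • Measure.dirac (x i))
            (∑ i, ENNReal.ofReal (b i) • Measure.dirac (x i)) <
          optCost c lam ρ + ENNReal.ofReal ε := by
  classical
  intro ε hε
  by_cases hM0 : lam Set.univ = 0
  · -- trivial zero-mass case
    have hlam0 : lam = 0 := Measure.measure_univ_eq_zero.mp hM0
    have hρ0 : ρ = 0 := Measure.measure_univ_eq_zero.mp (by rw [← hmass]; exact hM0)
    have h00 : optCost c (0 : Measure X) 0 = 0 := by
      refine le_antisymm ?_ (zero_le)
      refine le_trans (optCost_le c (0 : Measure (X × X)) (by simp) (by simp)) ?_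
      simp
    refine ⟨0, Fin.elim0, Fin.elim0, Fin.elim0, (fun i => i.elim0), (fun i => i.elim0),
      ?_, ?_, ?_, ?_⟩ <;>
      simp [Finset.univ_eq_empty, hlam0, hρ0, h00, ENNReal.ofReal_pos.mpr hε]
  -- main case
  obtain ⟨K₁, hK₁c, hK₁0⟩ := hlamc
  obtain ⟨K₂, hK₂c, hK₂0⟩ := hρc
  set K : Set X := K₁ ∪ K₂ with hKdef
  have hK : IsCompact K := hK₁c.union hK₂c
  have hKmeas : MeasurableSet K := hK.isClosed.measurableSet
  have hlamK : lam Kᶜ = 0 :=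
    measure_mono_null (Set.compl_subset_compl.mpr Set.subset_union_left) hK₁0
  have hρK : ρ Kᶜ = 0 :=
    measure_mono_null (Set.compl_subset_compl.mpr Set.subset_union_right) hK₂0
  have hlamKfull : lam K = lam Set.univ := by
    rw [← measure_add_measure_compl hKmeas, hlamK, add_zero]
  have hρKfull : ρ K = ρ Set.univ := by
    rw [← measure_add_measure_compl hKmeas, hρK, add_zero]
  have hKne : K.Nonempty := by
    rw [Set.nonempty_iff_ne_empty]
    intro h
    rw [← hlamKfull, h] at hM0
    simp at hM0
  set Mt : ℝ := (lam Set.univ).toReal with hMtdef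
  have hMt0 : 0 ≤ Mt := ENNReal.toReal_nonneg
  have hMfin : lam Set.univ ≠ ⊤ := measure_ne_top _ _
  set η : ℝ := ε / (2 * (Mt + 1)) with hηdef
  have hη : 0 < η := by positivity
  have hηMt : ENNReal.ofReal η * lam Set.univ < ENNReal.ofReal ε := by
    conv_lhs => rw [← ENNReal.ofReal_toReal hMfin]
    rw [← ENNReal.ofReal_mul hη.le]
    refine (ENNReal.ofReal_lt_ofReal_iff hε).mpr ?_
    rw [hηdef, div_mul_eq_mul_div, div_lt_iff₀ (by positivity)]
    nlinarith
  -- uniform continuity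
  have hucK : UniformContinuousOn c (K ×ˢ K) :=
    (hK.prod hK).uniformContinuousOn_of_continuous hc.continuousOn
  obtain ⟨δ, hδ, hδc⟩ := Metric.uniformContinuousOn_iff.mp hucK η hη
  -- finite cover by balls
  have hcov : K ⊆ ⋃ y : K, Metric.ball (y : X) (δ / 2) := fun u hu =>
    Set.mem_iUnion.mpr ⟨⟨u, hu⟩, Metric.mem_ball_self (by linarith)⟩
  obtain ⟨t, ht⟩ := hK.elim_finite_subcover (fun y : K => Metric.ball (y : X) (δ / 2))
    (fun _ => Metric.isOpen_ball) hcov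
  set m : ℕ := t.card with hmdef
  set x : Fin m → X := fun i => ((t.equivFin.symm i : { a // a ∈ t }) : K) with hxdef
  have hxinj : Function.Injective x := by
    intro i j hij
    apply t.equivFin.symm.injective
    exact Subtype.ext (Subtype.ext hij)
  have hxK : ∀ i, x i ∈ K := fun i => ((t.equivFin.symm i : { a // a ∈ t }) : K).2
  have hcov' : ∀ u ∈ K, ∃ i, u ∈ Metric.ball (x i) (δ / 2) := by
    intro u hu
    obtain ⟨y, hy, hu'⟩ := Set.mem_iUnion₂.mp (ht hu)
    exact ⟨t.equivFin ⟨y, hy⟩, by simpa [hxdef] using hu'⟩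
  -- the partition
  set E : Fin m → Set X := fun i =>
    (K ∩ Metric.ball (x i) (δ / 2)) \ ⋃ (j : Fin m) (_ : j < i), Metric.ball (x j) (δ / 2)
    with hEdef
  have hEm : ∀ i, MeasurableSet (E i) :=
    fun i => ((hKmeas.inter Metric.isOpen_ball.measurableSet).diff
      (MeasurableSet.iUnion fun j => MeasurableSet.iUnion fun _ =>
        Metric.isOpen_ball.measurableSet))
  have hEK : ∀ i, E i ⊆ K := fun i u hu => hu.1.1
  have hEb : ∀ i, E i ⊆ Metric.ball (x i) (δ / 2) := fun i u hu => hu.1.2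
  have hEdisj : Pairwise (Function.onFun Disjoint E) := by
    intro i j hij
    rw [Function.onFun, Set.disjoint_left]
    intro u hui huj
    rcases lt_or_gt_of_ne hij with h | h
    · exact huj.2 (Set.mem_iUnion₂.mpr ⟨i, h, hui.1.2⟩)
    · exact hui.2 (Set.mem_iUnion₂.mpr ⟨j, h, huj.1.2⟩)
  have hEunion : (⋃ i, E i) = K := by
    apply Set.Subset.antisymm (Set.iUnion_subset hEK)
    intro u hu
    have hne : (Finset.univ.filter fun i => u ∈ Metric.ball (x i) (δ / 2)).Nonempty := by
      obtain ⟨i, hi⟩ := hcov' u hu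
      exact ⟨i, Finset.mem_filter.mpr ⟨Finset.mem_univ _, hi⟩⟩
    obtain ⟨i₀, hi₀mem, hi₀min⟩ := Finset.exists_min_image _ id hne
    have hi₀ : u ∈ Metric.ball (x i₀) (δ / 2) := (Finset.mem_filter.mp hi₀mem).2
    refine Set.mem_iUnion.mpr ⟨i₀, ⟨⟨hu, hi₀⟩, ?_⟩⟩
    intro hmem
    obtain ⟨j, hj, hj'⟩ := Set.mem_iUnion₂.mp hmem
    exact absurd (hi₀min j (Finset.mem_filter.mpr ⟨Finset.mem_univ _, hj'⟩)) (not_le.mpr hj)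
  have hm0 : 0 < m := by
    obtain ⟨u, hu⟩ := hKne
    obtain ⟨i, _⟩ := hcov' u hu
    exact i.pos
  -- the discretized measures
  set lam' : Measure X := ∑ i, lam (E i) • Measure.dirac (x i) with hlam'def
  set ρ' : Measure X := ∑ i, ρ (E i) • Measure.dirac (x i) with hρ'def
  have hsum_measure : ∀ (μ : Measure X), μ Kᶜ = 0 →
      (∑ i, μ (E i) • Measure.dirac (x i)) Set.univ = lam Set.univ → True := fun _ _ _ => trivial
  have hmass' : ∀ (μ : Measure X), μ K = μ Set.univ →
      (∑ i, μ (E i) • Measure.dirac (x i)) Set.univ = μ Set.univ := by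
    intro μ hμ
    rw [Measure.finset_sum_apply]
    simp only [Measure.smul_apply, measure_univ, smul_eq_mul, mul_one]
    rw [← tsum_fintype (L := SummationFilter.unconditional _), ← measure_iUnion hEdisj hEm, hEunion, hμ]
  have hlam'mass : lam' Set.univ = lam Set.univ := hmass' lam hlamKfull
  have hρ'mass : ρ' Set.univ = lam Set.univ := by
    rw [hmass' ρ hρKfull, ← hmass]
  -- singleton values
  have hsingle : ∀ (μ : Measure X) (i₀ : Fin m),
      (∑ i, μ (E i) • Measure.dirac (x i)) {x i₀} = μ (E i₀) := by
    intro μ i₀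
    rw [Measure.finset_sum_apply]
    rw [Finset.sum_eq_single i₀]
    · simp [Measure.dirac_apply' _ (measurableSet_singleton _)]
    · intro j _ hj
      simp only [Measure.smul_apply, smul_eq_mul]
      rw [Measure.dirac_apply' _ (measurableSet_singleton _)]
      rw [Set.indicator_of_notMem, mul_zero]
      simp only [Set.mem_singleton_iff]
      exact fun h => hj (hxinj h)
    · simp
  -- the map T
  set f : X → Fin m := fun u => if h : ∃ i, u ∈ E i then h.choose else ⟨0, hm0⟩ with hfdef
  have hf1 : ∀ i, ∀ u ∈ E i, f u = i := by
    intro i u hu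
    have h : ∃ j, u ∈ E j := ⟨i, hu⟩
    rw [hfdef]
    simp only [dif_pos h]
    by_contra hne
    exact Set.disjoint_left.mp (hEdisj hne) h.choose_spec hu
  have hf0 : ∀ u, u ∉ K → f u = ⟨0, hm0⟩ := by
    intro u hu
    have h : ¬ ∃ j, u ∈ E j := by
      rintro ⟨j, hj⟩; exact hu (hEK j hj)
    rw [hfdef]; simp only [dif_neg h]
  have hfmeas : Measurable f := by
    apply measurable_to_countable'
    intro i
    have : f ⁻¹' {i} = E i ∪ (if i = ⟨0, hm0⟩ then Kᶜ else ∅) := by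
      ext u
      simp only [Set.mem_preimage, Set.mem_singleton_iff, Set.mem_union]
      constructor
      · intro h
        by_cases hu : u ∈ K
        · rw [← hEunion] at hu
          obtain ⟨j, hj⟩ := Set.mem_iUnion.mp hu
          rw [hf1 j u hj] at h
          exact Or.inl (h ▸ hj)
        · rw [hf0 u hu] at h
          right
          rw [if_pos h.symm]
          exact hu
      · rintro (h | h)
        · exact hf1 i u h
        · by_cases hi : i = ⟨0, hm0⟩
          · rw [if_pos hi] at h
            rw [hf0 u h, hi]
          · rw [if_neg hi] at h
            exact absurd h (Set.notMem_empty u)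
    rw [this]
    refine (hEm i).union ?_
    split <;> simp [hKmeas.compl]
  set T : X → X := fun u => x (f u) with hTdef
  have hTmeas : Measurable T := (measurable_from_top (f := x)).comp hfmeas
  have hTE : ∀ i, ∀ u ∈ E i, T u = x i := fun i u hu => by rw [hTdef]; simp [hf1 i u hu]
  have hmapT : ∀ μ : Measure X, μ Kᶜ = 0 →
      Measure.map T μ = ∑ i, μ (E i) • Measure.dirac (x i) := by
    intro μ hμ
    ext s hs
    rw [Measure.map_apply hTmeas hs, Measure.finset_sum_apply]
    have hTK : T ⁻¹' s ∩ K = ⋃ i ∈ Finset.univ.filter (fun i => x i ∈ s), E i := by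
      ext u
      simp only [Set.mem_inter_iff, Set.mem_preimage, Set.mem_iUnion, Finset.mem_filter,
        Finset.mem_univ, true_and, exists_prop]
      constructor
      · rintro ⟨hTs, huK⟩
        rw [← hEunion] at huK
        obtain ⟨i, hi⟩ := Set.mem_iUnion.mp huK
        rw [hTE i u hi] at hTs
        exact ⟨i, hTs, hi⟩
      · rintro ⟨i, hxi, hi⟩
        exact ⟨by rw [hTE i u hi]; exact hxi, hEK i hi⟩
    have h1 : μ (T ⁻¹' s) = μ (T ⁻¹' s ∩ K) := by
      refine le_antisymm ?_ (measure_mono Set.inter_subset_left)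
      calc μ (T ⁻¹' s) ≤ μ (T ⁻¹' s ∩ K) + μ (T ⁻¹' s \ K) := measure_le_inter_add_diff _ _ _
      _ = μ (T ⁻¹' s ∩ K) := by
          rw [measure_mono_null (Set.diff_subset_iff.mpr (by simp [Set.union_comm])) hμ, add_zero]
          -- T⁻¹ s \ K ⊆ Kᶜ
    rw [h1, hTK, measure_biUnion_finset (hEdisj.set_pairwise _) (fun i _ => hEm i)]
    rw [Finset.sum_filter]
    refine Finset.sum_congr rfl fun i _ => ?_
    simp only [Measure.smul_apply, smul_eq_mul]
    rw [Measure.dirac_apply' _ hs]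
    by_cases hxi : x i ∈ s
    · simp [hxi]
    · simp [hxi]
  have hcmeas : Measurable fun q : X × X => ENNReal.ofReal (c q) := hc.measurable.ennreal_ofReal
  have hTT : Measurable (Prod.map T T) := Measurable.prodMap hTmeas hTmeas
  have haeK : ∀ π : Measure (X × X), π.fst = lam → π.snd = ρ → π ((K ×ˢ K)ᶜ) = 0 := by
    intro π h1 h2
    have hsub : (K ×ˢ K)ᶜ ⊆ (Kᶜ ×ˢ (Set.univ : Set X)) ∪ ((Set.univ : Set X) ×ˢ Kᶜ) := by
      intro q hq
      simp only [Set.mem_compl_iff, Set.mem_prod, not_and_or] at hq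
      rcases hq with h | h
      · exact Or.inl ⟨h, trivial⟩
      · exact Or.inr ⟨trivial, h⟩
    refine measure_mono_null hsub (measure_union_null ?_ ?_)
    · have he : Kᶜ ×ˢ (Set.univ : Set X) = Prod.fst ⁻¹' (Kᶜ : Set X) := by ext q; simp
      rw [he, ← Measure.fst_apply hKmeas.compl, h1]; exact hlamK
    · have he : (Set.univ : Set X) ×ˢ Kᶜ = Prod.snd ⁻¹' (Kᶜ : Set X) := by ext q; simp
      rw [he, ← Measure.snd_apply hKmeas.compl, h2]; exact hρK
  have hckey : ∀ i j : Fin m, ∀ u ∈ E i, ∀ v ∈ E j,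
      c (x i, x j) ≤ c (u, v) + η ∧ c (u, v) ≤ c (x i, x j) + η := by
    intro i j u hu v hv
    have huv : ((u, v) : X × X) ∈ K ×ˢ K := ⟨hEK i hu, hEK j hv⟩
    have hxx : ((x i, x j) : X × X) ∈ K ×ˢ K := ⟨hxK i, hxK j⟩
    have hd : dist ((u, v) : X × X) (x i, x j) < δ := by
      rw [Prod.dist_eq]
      have h1 : dist u (x i) < δ / 2 := Metric.mem_ball.mp (hEb i hu)
      have h2 : dist v (x j) < δ / 2 := Metric.mem_ball.mp (hEb j hv)
      exact max_lt (by linarith) (by linarith)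
    have habs := hδc _ huv _ hxx hd
    rw [Real.dist_eq, abs_lt] at habs
    constructor <;> linarith [habs.1, habs.2]
  -- direction 1
  have hdir1 : optCost c lam' ρ' ≤ optCost c lam ρ + ENNReal.ofReal η * lam Set.univ := by
    refine le_optCost_add c fun π h1 h2 => ?_
    have hfstTT : (Measure.map (Prod.map T T) π).fst = lam' := by
      rw [Measure.fst, Measure.map_map measurable_fst hTT]
      have he : (Prod.fst ∘ Prod.map T T : X × X → X) = T ∘ Prod.fst := rfl
      rw [he, ← Measure.map_map hTmeas measurable_fst, ← Measure.fst, h1, hmapT lam hlamK]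
    have hsndTT : (Measure.map (Prod.map T T) π).snd = ρ' := by
      rw [Measure.snd, Measure.map_map measurable_snd hTT]
      have he : (Prod.snd ∘ Prod.map T T : X × X → X) = T ∘ Prod.snd := rfl
      rw [he, ← Measure.map_map hTmeas measurable_snd, ← Measure.snd, h2, hmapT ρ hρK]
    refine (optCost_le c _ hfstTT hsndTT).trans ?_
    rw [lintegral_map hcmeas hTT]
    have hbound : ∀ᵐ q ∂π, ENNReal.ofReal (c (Prod.map T T q)) ≤
        ENNReal.ofReal (c q) + ENNReal.ofReal η := by
      have hae : ∀ᵐ q ∂π, q ∈ K ×ˢ K := by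
        rw [MeasureTheory.ae_iff]
        exact haeK π h1 h2
      filter_upwards [hae] with q hq
      have hq1 : q.1 ∈ ⋃ i, E i := by rw [hEunion]; exact hq.1
      have hq2 : q.2 ∈ ⋃ i, E i := by rw [hEunion]; exact hq.2
      obtain ⟨i, hi⟩ := Set.mem_iUnion.mp hq1
      obtain ⟨j, hj⟩ := Set.mem_iUnion.mp hq2
      have hTq : Prod.map T T q = (x i, x j) := by
        show (T q.1, T q.2) = (x i, x j)
        rw [hTE i _ hi, hTE j _ hj]
      rw [hTq, ← ENNReal.ofReal_add (hc0 q) hη.le]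
      refine ENNReal.ofReal_le_ofReal ?_
      have hkey := (hckey i j q.1 hi q.2 hj).1
      simpa using hkey
    calc ∫⁻ q, ENNReal.ofReal (c (Prod.map T T q)) ∂π
        ≤ ∫⁻ q, (ENNReal.ofReal (c q) + ENNReal.ofReal η) ∂π := lintegral_mono_ae hbound
      _ = (∫⁻ q, ENNReal.ofReal (c q) ∂π) + ENNReal.ofReal η * π Set.univ := by
          rw [lintegral_add_right _ measurable_const, lintegral_const]
      _ = (∫⁻ q, ENNReal.ofReal (c q) ∂π) + ENNReal.ofReal η * lam Set.univ := by
          rw [← Measure.fst_univ, h1]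
  -- finiteness of the optimal cost
  have hρuniv0 : ρ Set.univ ≠ 0 := by rw [← hmass]; exact hM0
  have hρunivtop : ρ Set.univ ≠ ⊤ := measure_ne_top _ _
  have hCfin : optCost c lam ρ ≠ ⊤ := by
    obtain ⟨q₀, hq₀K, hq₀max⟩ := (hK.prod hK).exists_isMaxOn (hKne.prod hKne) hc.continuousOn
    set π₀ : Measure (X × X) := (ρ Set.univ)⁻¹ • lam.prod ρ with hπ₀def
    have h1 : π₀.fst = lam := by
      rw [hπ₀def, Measure.fst, Measure.map_smul, Measure.map_fst_prod]
      rw [smul_smul, ENNReal.inv_mul_cancel hρuniv0 hρunivtop, one_smul]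
    have h2 : π₀.snd = ρ := by
      rw [hπ₀def, Measure.snd, Measure.map_smul, Measure.map_snd_prod]
      rw [smul_smul, hmass, ENNReal.inv_mul_cancel hρuniv0 hρunivtop, one_smul]
    have hπ₀univ : π₀ Set.univ ≠ ⊤ := by
      rw [hπ₀def, Measure.smul_apply, ← Set.univ_prod_univ, Measure.prod_prod, smul_eq_mul]
      exact ENNReal.mul_ne_top (ENNReal.inv_ne_top.mpr hρuniv0)
        (ENNReal.mul_ne_top hMfin hρunivtop)
    refine ne_top_of_le_ne_top ?_ (optCost_le c π₀ h1 h2)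
    have hres : π₀.restrict (K ×ˢ K) = π₀ := by
      refine Measure.restrict_eq_self_of_ae_mem ?_
      rw [MeasureTheory.ae_iff]
      exact haeK π₀ h1 h2
    have heq : ∫⁻ q, ENNReal.ofReal (c q) ∂π₀ = ∫⁻ q in K ×ˢ K, ENNReal.ofReal (c q) ∂π₀ := by
      rw [hres]
    rw [heq]
    have hle : ∫⁻ q in K ×ˢ K, ENNReal.ofReal (c q) ∂π₀ ≤
        ENNReal.ofReal (c q₀) * π₀ (K ×ˢ K) := by
      refine le_trans (setLIntegral_mono measurable_const
        (fun q hq => ENNReal.ofReal_le_ofReal (hq₀max hq))) ?_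
      rw [setLIntegral_const]
    refine ne_top_of_le_ne_top ?_ hle
    exact ENNReal.mul_ne_top ENNReal.ofReal_ne_top
      (ne_top_of_le_ne_top hπ₀univ (measure_mono (Set.subset_univ _)))
  have hkfin : ENNReal.ofReal η * lam Set.univ ≠ ⊤ :=
    ENNReal.mul_ne_top ENNReal.ofReal_ne_top hMfin
  have hC'fin : optCost c lam' ρ' ≠ ⊤ :=
    ne_top_of_le_ne_top (ENNReal.add_ne_top.mpr ⟨hCfin, hkfin⟩) hdir1
  -- direction 2
  have hdir2 : optCost c lam ρ ≤ optCost c lam' ρ' + ENNReal.ofReal η * lam Set.univ := by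
    refine le_optCost_add c fun π' h1 h2 => ?_
    set S : Set X := Set.range x with hSdef
    have hSmeas : MeasurableSet S := (Set.finite_range x).measurableSet
    have hdiracS : ∀ μ : Measure X, (∑ i, μ (E i) • Measure.dirac (x i)) Sᶜ = 0 := by
      intro μ
      rw [Measure.finset_sum_apply]
      refine Finset.sum_eq_zero fun i _ => ?_
      simp only [Measure.smul_apply, smul_eq_mul]
      rw [Measure.dirac_apply' _ hSmeas.compl,
        Set.indicator_of_notMem (by simp [hSdef] : x i ∉ Sᶜ), mul_zero]
    have hπ'Sc1 : π' (Sᶜ ×ˢ (Set.univ : Set X)) = 0 := by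
      have he : Sᶜ ×ˢ (Set.univ : Set X) = Prod.fst ⁻¹' (Sᶜ : Set X) := by ext q; simp
      rw [he, ← Measure.fst_apply hSmeas.compl, h1]
      exact hdiracS lam
    have hπ'Sc2 : π' ((Set.univ : Set X) ×ˢ Sᶜ) = 0 := by
      have he : (Set.univ : Set X) ×ˢ Sᶜ = Prod.snd ⁻¹' (Sᶜ : Set X) := by ext q; simp
      rw [he, ← Measure.snd_apply hSmeas.compl, h2]
      exact hdiracS ρ
    have hπ'S : π' ((S ×ˢ S)ᶜ) = 0 := by
      have hsub : (S ×ˢ S)ᶜ ⊆ (Sᶜ ×ˢ (Set.univ : Set X)) ∪ ((Set.univ : Set X) ×ˢ Sᶜ) := by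
        intro q hq
        simp only [Set.mem_compl_iff, Set.mem_prod, not_and_or] at hq
        rcases hq with h | h
        · exact Or.inl ⟨h, trivial⟩
        · exact Or.inr ⟨trivial, h⟩
      exact measure_mono_null hsub (measure_union_null hπ'Sc1 hπ'Sc2)
    set w : Fin m → Fin m → ℝ≥0∞ := fun i j => π' (({x i} : Set X) ×ˢ ({x j} : Set X))
      with hwdef
    -- row sums
    have hrow : ∀ i, ∑ j, w i j = lam (E i) := by
      intro i
      have hU : (⋃ j, (({x i} : Set X) ×ˢ ({x j} : Set X))) = ({x i} : Set X) ×ˢ S :=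
        union_singleton_prod x (x i)
      have hdisj : Pairwise (Function.onFun Disjoint
          fun j => (({x i} : Set X) ×ˢ ({x j} : Set X))) := by
        intro j k hjk
        rw [Function.onFun, Set.disjoint_left]
        rintro q ⟨_, hq2⟩ ⟨_, hq2'⟩
        simp only [Set.mem_singleton_iff] at hq2 hq2'
        exact hjk (hxinj (hq2 ▸ hq2'.symm ▸ rfl))
      have h1' : ∑ j, w i j = π' (({x i} : Set X) ×ˢ S) := by
        rw [← tsum_fintype (L := SummationFilter.unconditional _), ← measure_iUnion hdisj
          (fun j => (measurableSet_singleton _).prod (measurableSet_singleton _)), hU]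
      have h2' : π' (({x i} : Set X) ×ˢ S) = π' (({x i} : Set X) ×ˢ (Set.univ : Set X)) := by
        refine le_antisymm (measure_mono (Set.prod_mono_right (Set.subset_univ S))) ?_
        calc π' (({x i} : Set X) ×ˢ (Set.univ : Set X))
            ≤ π' (({x i} : Set X) ×ˢ S ∪ (Set.univ : Set X) ×ˢ Sᶜ) := by
              refine measure_mono ?_
              rintro ⟨u, v⟩ ⟨hu, -⟩
              by_cases hv : v ∈ S
              · exact Or.inl ⟨hu, hv⟩
              · exact Or.inr ⟨trivial, hv⟩
          _ ≤ π' (({x i} : Set X) ×ˢ S) + π' ((Set.univ : Set X) ×ˢ Sᶜ) := measure_union_le _ _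
          _ = π' (({x i} : Set X) ×ˢ S) := by rw [hπ'Sc2, add_zero]
      have he : ({x i} : Set X) ×ˢ (Set.univ : Set X) = Prod.fst ⁻¹' ({x i} : Set X) := by
        ext ⟨u, v⟩; simp [eq_comm]
      rw [h1', h2', he, ← Measure.fst_apply (measurableSet_singleton _), h1]
      exact hsingle lam i
    -- column sums
    have hcol : ∀ j, ∑ i, w i j = ρ (E j) := by
      intro j
      have hU : (⋃ i, (({x i} : Set X) ×ˢ ({x j} : Set X))) = S ×ˢ ({x j} : Set X) :=
        union_prod_singleton x (x j)
      have hdisj : Pairwise (Function.onFun Disjoint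
          fun i => (({x i} : Set X) ×ˢ ({x j} : Set X))) := by
        intro i k hik
        rw [Function.onFun, Set.disjoint_left]
        rintro q ⟨hq1, -⟩ ⟨hq1', -⟩
        simp only [Set.mem_singleton_iff] at hq1 hq1'
        exact hik (hxinj (hq1 ▸ hq1'.symm ▸ rfl))
      have h1' : ∑ i, w i j = π' (S ×ˢ ({x j} : Set X)) := by
        rw [← tsum_fintype (L := SummationFilter.unconditional _), ← measure_iUnion hdisj
          (fun i => (measurableSet_singleton _).prod (measurableSet_singleton _)), hU]
      have h2' : π' (S ×ˢ ({x j} : Set X)) = π' ((Set.univ : Set X) ×ˢ ({x j} : Set X)) := by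
        refine le_antisymm (measure_mono (Set.prod_mono_left (Set.subset_univ S))) ?_
        calc π' ((Set.univ : Set X) ×ˢ ({x j} : Set X))
            ≤ π' (S ×ˢ ({x j} : Set X) ∪ Sᶜ ×ˢ (Set.univ : Set X)) := by
              refine measure_mono ?_
              rintro ⟨u, v⟩ ⟨-, hv⟩
              by_cases hu : u ∈ S
              · exact Or.inl ⟨hu, hv⟩
              · exact Or.inr ⟨hu, trivial⟩
          _ ≤ π' (S ×ˢ ({x j} : Set X)) + π' (Sᶜ ×ˢ (Set.univ : Set X)) := measure_union_le _ _
          _ = π' (S ×ˢ ({x j} : Set X)) := by rw [hπ'Sc1, add_zero]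
      have he : (Set.univ : Set X) ×ˢ ({x j} : Set X) = Prod.snd ⁻¹' ({x j} : Set X) := by
        ext ⟨u, v⟩; simp [eq_comm]
      rw [h1', h2', he, ← Measure.snd_apply (measurableSet_singleton _), h2]
      exact hsingle ρ j
    have htot : ∑ i, ∑ j, w i j = lam Set.univ := by
      calc ∑ i, ∑ j, w i j = ∑ i, lam (E i) := Finset.sum_congr rfl fun i _ => hrow i
        _ = lam Set.univ := by
            rw [← tsum_fintype (L := SummationFilter.unconditional _), ← measure_iUnion hEdisj hEm, hEunion, hlamKfull]
    have hwrow0 : ∀ i j, lam (E i) = 0 → w i j = 0 := by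
      intro i j h
      refine le_antisymm ?_ (zero_le)
      calc w i j ≤ ∑ j', w i j' :=
            Finset.single_le_sum (fun _ _ => zero_le) (Finset.mem_univ j)
        _ = 0 := by rw [hrow i, h]
    have hwcol0 : ∀ i j, ρ (E j) = 0 → w i j = 0 := by
      intro i j h
      refine le_antisymm ?_ (zero_le)
      calc w i j ≤ ∑ i', w i' j :=
            Finset.single_le_sum (f := fun i' => w i' j) (fun _ _ => zero_le)
              (Finset.mem_univ i)
        _ = 0 := by rw [hcol j, h]
    -- the component measures
    set μm : Fin m → Measure X := fun i => (lam (E i))⁻¹ • lam.restrict (E i) with hμmdef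
    set νm : Fin m → Measure X := fun j => (ρ (E j))⁻¹ • ρ.restrict (E j) with hνmdef
    have hμuniv : ∀ i, lam (E i) ≠ 0 → μm i Set.univ = 1 := by
      intro i h
      rw [hμmdef]
      simp only [Measure.smul_apply, smul_eq_mul, Measure.restrict_apply_univ]
      exact ENNReal.inv_mul_cancel h (measure_ne_top _ _)
    have hνuniv : ∀ j, ρ (E j) ≠ 0 → νm j Set.univ = 1 := by
      intro j h
      rw [hνmdef]
      simp only [Measure.smul_apply, smul_eq_mul, Measure.restrict_apply_univ]
      exact ENNReal.inv_mul_cancel h (measure_ne_top _ _)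
    have hμsmul : ∀ i, lam (E i) • μm i = lam.restrict (E i) := by
      intro i
      by_cases h : lam (E i) = 0
      · rw [h, zero_smul, eq_comm, Measure.restrict_eq_zero]
        exact h
      · rw [hμmdef]
        simp only
        rw [smul_smul, ENNReal.mul_inv_cancel h (measure_ne_top _ _), one_smul]
    have hνsmul : ∀ j, ρ (E j) • νm j = ρ.restrict (E j) := by
      intro j
      by_cases h : ρ (E j) = 0
      · rw [h, zero_smul, eq_comm, Measure.restrict_eq_zero]
        exact h
      · rw [hνmdef]
        simp only
        rw [smul_smul, ENNReal.mul_inv_cancel h (measure_ne_top _ _), one_smul]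
    have hμcompl : ∀ i, μm i (E i)ᶜ = 0 := by
      intro i
      rw [hμmdef]
      simp only [Measure.smul_apply, smul_eq_mul]
      rw [Measure.restrict_apply (hEm i).compl]
      simp
    have hνcompl : ∀ j, νm j (E j)ᶜ = 0 := by
      intro j
      rw [hνmdef]
      simp only [Measure.smul_apply, smul_eq_mul]
      rw [Measure.restrict_apply (hEm j).compl]
      simp
    -- the glued coupling
    set π : Measure (X × X) := ∑ i, ∑ j, w i j • (μm i).prod (νm j) with hπdef
    have hπfst : π.fst = lam := by
      rw [hπdef, fst_finset_sum]
      have hterm : ∀ i, (∑ j, w i j • (μm i).prod (νm j)).fst = lam.restrict (E i) := by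
        intro i
        rw [fst_finset_sum]
        have he : ∀ j, (w i j • (μm i).prod (νm j)).fst = w i j • μm i := by
          intro j
          rw [fst_smul_meas, Measure.fst, Measure.map_fst_prod]
          by_cases h : ρ (E j) = 0
          · rw [hwcol0 i j h]
            simp
          · rw [hνuniv j h, one_smul]
        rw [Finset.sum_congr rfl fun j _ => he j, ← Finset.sum_smul, hrow i, hμsmul i]
      rw [Finset.sum_congr rfl fun i _ => hterm i, ← Measure.sum_fintype,
        ← Measure.restrict_iUnion hEdisj hEm, hEunion]
      refine Measure.restrict_eq_self_of_ae_mem ?_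
      rw [MeasureTheory.ae_iff]
      exact hlamK
    have hπsnd : π.snd = ρ := by
      rw [hπdef, snd_finset_sum]
      have hterm : ∀ i, (∑ j, w i j • (μm i).prod (νm j)).snd = ∑ j, w i j • νm j := by
        intro i
        rw [snd_finset_sum]
        refine Finset.sum_congr rfl fun j _ => ?_
        rw [snd_smul_meas, Measure.snd, Measure.map_snd_prod]
        by_cases h : lam (E i) = 0
        · rw [hwrow0 i j h]
          simp
        · rw [hμuniv i h, one_smul]
      rw [Finset.sum_congr rfl fun i _ => hterm i, Finset.sum_comm]
      have hterm2 : ∀ j, (∑ i, w i j • νm j) = ρ.restrict (E j) := by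
        intro j
        rw [← Finset.sum_smul, hcol j, hνsmul j]
      rw [Finset.sum_congr rfl fun j _ => hterm2 j, ← Measure.sum_fintype,
        ← Measure.restrict_iUnion hEdisj hEm, hEunion]
      refine Measure.restrict_eq_self_of_ae_mem ?_
      rw [MeasureTheory.ae_iff]
      exact hρK
    -- integral of the discrete coupling
    have hπ'int : ∫⁻ q, ENNReal.ofReal (c q) ∂π'
        = ∑ i, ∑ j, w i j * ENNReal.ofReal (c (x i, x j)) := by
      have hresS : π'.restrict (S ×ˢ S) = π' := by
        refine Measure.restrict_eq_self_of_ae_mem ?_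
        rw [MeasureTheory.ae_iff]
        exact hπ'S
      set F : Finset (X × X) :=
        Finset.image (fun ij : Fin m × Fin m => (x ij.1, x ij.2)) Finset.univ with hFdef
      have hFS : (F : Set (X × X)) = S ×ˢ S := image_pair_coe x
      have hinj : ∀ a ∈ (Finset.univ : Finset (Fin m × Fin m)), ∀ b ∈ Finset.univ,
          (fun ij : Fin m × Fin m => (x ij.1, x ij.2)) a
            = (fun ij : Fin m × Fin m => (x ij.1, x ij.2)) b → a = b := by
        rintro ⟨a1, a2⟩ - ⟨b1, b2⟩ - hab
        simp only [Prod.mk.injEq] at hab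
        exact Prod.ext (hxinj hab.1) (hxinj hab.2)
      calc ∫⁻ q, ENNReal.ofReal (c q) ∂π'
          = ∫⁻ q in (F : Set (X × X)), ENNReal.ofReal (c q) ∂π' := by rw [hFS, hresS]
        _ = ∑ q ∈ F, ENNReal.ofReal (c q) * π' {q} := lintegral_finset F _
        _ = ∑ ij : Fin m × Fin m,
              ENNReal.ofReal (c (x ij.1, x ij.2)) * π' {(x ij.1, x ij.2)} := by
            rw [hFdef, Finset.sum_image hinj]
        _ = ∑ i, ∑ j, w i j * ENNReal.ofReal (c (x i, x j)) := by
            rw [← Finset.sum_product']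
            refine Finset.sum_congr rfl fun ij _ => ?_
            have hwq : π' {(x ij.1, x ij.2)} = w ij.1 ij.2 := by
              show π' {(x ij.1, x ij.2)} = π' (({x ij.1} : Set X) ×ˢ ({x ij.2} : Set X))
              rw [Set.singleton_prod_singleton]
            rw [hwq, mul_comm]
    -- cost bound for the glued coupling
    have hcost : ∫⁻ q, ENNReal.ofReal (c q) ∂π ≤
        (∫⁻ q, ENNReal.ofReal (c q) ∂π') + ENNReal.ofReal η * lam Set.univ := by
      have hint : ∫⁻ q, ENNReal.ofReal (c q) ∂π
          = ∑ i, ∑ j, w i j * ∫⁻ q, ENNReal.ofReal (c q) ∂((μm i).prod (νm j)) := by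
        rw [hπdef, lintegral_finset_sum_measure]
        refine Finset.sum_congr rfl fun i _ => ?_
        rw [lintegral_finset_sum_measure]
        exact Finset.sum_congr rfl fun j _ => lintegral_smul_measure _ _
      rw [hint]
      have hterm : ∀ i j, w i j * ∫⁻ q, ENNReal.ofReal (c q) ∂((μm i).prod (νm j))
          ≤ w i j * (ENNReal.ofReal (c (x i, x j)) + ENNReal.ofReal η) := by
        intro i j
        by_cases h0 : w i j = 0
        · rw [h0]
          simp
        have hiE : lam (E i) ≠ 0 := fun h => h0 (hwrow0 i j h)
        have hjE : ρ (E j) ≠ 0 := fun h => h0 (hwcol0 i j h)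
        refine mul_le_mul_right ?_ _
        have hnull : (μm i).prod (νm j) ((E i ×ˢ E j)ᶜ) = 0 := by
          have hsub : (E i ×ˢ E j)ᶜ ⊆
              ((E i)ᶜ ×ˢ (Set.univ : Set X)) ∪ ((Set.univ : Set X) ×ˢ (E j)ᶜ) := by
            intro q hq
            simp only [Set.mem_compl_iff, Set.mem_prod, not_and_or] at hq
            rcases hq with h | h
            · exact Or.inl ⟨h, trivial⟩
            · exact Or.inr ⟨trivial, h⟩
          refine measure_mono_null hsub (measure_union_null ?_ ?_)
          · rw [Measure.prod_prod, hμcompl i, zero_mul]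
          · rw [Measure.prod_prod, hνcompl j, mul_zero]
        have hres : ((μm i).prod (νm j)).restrict (E i ×ˢ E j) = (μm i).prod (νm j) := by
          refine Measure.restrict_eq_self_of_ae_mem ?_
          rw [MeasureTheory.ae_iff]
          exact hnull
        calc ∫⁻ q, ENNReal.ofReal (c q) ∂((μm i).prod (νm j))
            = ∫⁻ q in E i ×ˢ E j, ENNReal.ofReal (c q) ∂((μm i).prod (νm j)) := by rw [hres]
          _ ≤ (ENNReal.ofReal (c (x i, x j)) + ENNReal.ofReal η)
                * ((μm i).prod (νm j)) (E i ×ˢ E j) := by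
              refine le_trans (setLIntegral_mono measurable_const fun q hq => ?_)
                (le_of_eq (setLIntegral_const _ _))
              rw [← ENNReal.ofReal_add (hc0 _) hη.le]
              refine ENNReal.ofReal_le_ofReal ?_
              have hk := (hckey i j q.1 hq.1 q.2 hq.2).2
              simpa using hk
          _ ≤ (ENNReal.ofReal (c (x i, x j)) + ENNReal.ofReal η) * 1 := by
              refine mul_le_mul_right (le_of_eq ?_) _
              rw [Measure.prod_prod]
              have h1'' : μm i (E i) = 1 := by
                have := hμuniv i hiE
                rw [← this]
                refine le_antisymm (measure_mono (Set.subset_univ _)) ?_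
                calc μm i Set.univ ≤ μm i (E i) + μm i (E i)ᶜ :=
                      le_of_eq (measure_add_measure_compl (hEm i)).symm
                  _ = μm i (E i) := by rw [hμcompl i, add_zero]
              have h2'' : νm j (E j) = 1 := by
                have := hνuniv j hjE
                rw [← this]
                refine le_antisymm (measure_mono (Set.subset_univ _)) ?_
                calc νm j Set.univ ≤ νm j (E j) + νm j (E j)ᶜ :=
                      le_of_eq (measure_add_measure_compl (hEm j)).symm
                  _ = νm j (E j) := by rw [hνcompl j, add_zero]
              rw [h1'', h2'', one_mul]
          _ = ENNReal.ofReal (c (x i, x j)) + ENNReal.ofReal η := mul_one _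
      calc ∑ i, ∑ j, w i j * ∫⁻ q, ENNReal.ofReal (c q) ∂((μm i).prod (νm j))
          ≤ ∑ i, ∑ j, w i j * (ENNReal.ofReal (c (x i, x j)) + ENNReal.ofReal η) :=
            Finset.sum_le_sum fun i _ => Finset.sum_le_sum fun j _ => hterm i j
        _ = (∑ i, ∑ j, w i j * ENNReal.ofReal (c (x i, x j)))
              + ∑ i, ∑ j, w i j * ENNReal.ofReal η := by
            simp only [mul_add, Finset.sum_add_distrib]
        _ = (∫⁻ q, ENNReal.ofReal (c q) ∂π') + ENNReal.ofReal η * lam Set.univ := by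
            rw [hπ'int]
            congr 1
            simp only [← Finset.sum_mul]
            rw [htot, mul_comm]
    exact le_trans (optCost_le c π hπfst hπsnd) hcost
  -- conclusion
  have hEqa : (∑ i, ENNReal.ofReal ((lam (E i)).toReal) • Measure.dirac (x i)) = lam' :=
    Finset.sum_congr rfl fun i _ => by rw [ENNReal.ofReal_toReal (measure_ne_top _ _)]
  have hEqb : (∑ i, ENNReal.ofReal ((ρ (E i)).toReal) • Measure.dirac (x i)) = ρ' :=
    Finset.sum_congr rfl fun i _ => by rw [ENNReal.ofReal_toReal (measure_ne_top _ _)]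
  refine ⟨m, x, fun i => (lam (E i)).toReal, fun i => (ρ (E i)).toReal,
    fun i => ENNReal.toReal_nonneg, fun i => ENNReal.toReal_nonneg, ?_, ?_, ?_, ?_⟩ <;>
    simp only [hEqa, hEqb]
  · exact hlam'mass
  · exact hρ'mass
  · exact lt_of_le_of_lt hdir2 (ENNReal.add_lt_add_left hC'fin hηMt)
  · exact lt_of_le_of_lt hdir1 (ENNReal.add_lt_add_left hCfin hηMt)
end

section
/- Let X and Y be Polish metric spaces, let μ and ν be finite positive Borel measures with μ(X) = ν(Y), and let κ_n, κ ∈ Π(μ,ν) with κ_n converging weakly to κ (∫ f dκ_n → ∫ f dκ for every bounded continuous f on X × Y). Then for every h ∈ L^∞(X,μ) and every bounded continuous g : Y → ℝ, one has ∫_{X×Y} h(x) g(y) dκ_n(x,y) → ∫_{X×Y} h(x) g(y) dκ(x,y). -/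
open MeasureTheory Filter Topology

/-- Auxiliary: for a measure `π` on `X × Y` with first marginal `μ`, the integral of
`h z.1 * g z.2` differs from that of `f z.1 * g z.2` by at most `‖g‖ * ∫ ‖h - f‖ dμ`. -/
lemma stmt18_aux {X Y : Type*}
    [MeasurableSpace X] [TopologicalSpace X] [SecondCountableTopology X] [OpensMeasurableSpace X] [TopologicalSpace Y] [MeasurableSpace Y] [OpensMeasurableSpace Y]
    (μ : Measure X) [IsFiniteMeasure μ]
    (π : Measure (X × Y)) [IsFiniteMeasure π] (hπfst : π.fst = μ)
    (h : X → ℝ) (hh : MemLp h ⊤ μ) (f : X → ℝ) (hf : Continuous f)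
    (hfb : ∃ C, ∀ x, ‖f x‖ ≤ C)
    (g : BoundedContinuousFunction Y ℝ) :
    Integrable (fun z : X × Y => h z.1 * g z.2) π ∧
    |(∫ z : X × Y, h z.1 * g z.2 ∂π) - ∫ z : X × Y, f z.1 * g z.2 ∂π|
      ≤ ‖g‖ * ∫ x, ‖h x - f x‖ ∂μ := by
  have hmap : π.map Prod.fst = μ := by rw [← Measure.fst]; exact hπfst
  have hasm : AEStronglyMeasurable h (π.map Prod.fst) := by
    rw [hmap]; exact hh.aestronglyMeasurable
  have hasm' : AEStronglyMeasurable (fun z : X × Y => h z.1) π :=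
    hasm.comp_measurable measurable_fst
  -- a.e. bound for h
  set C : ℝ := (eLpNorm h ⊤ μ).toReal with hC
  have hbd : ∀ᵐ x ∂μ, ‖h x‖ ≤ C := by
    filter_upwards [ae_le_eLpNormEssSup (f := h) (μ := μ)] with x hx
    have hne : eLpNormEssSup h μ ≠ ⊤ := by
      rw [← eLpNorm_exponent_top]; exact hh.eLpNorm_ne_top
    have := ENNReal.toReal_mono hne hx
    simpa [hC, eLpNorm_exponent_top] using this
  have hbdπ : ∀ᵐ z ∂π, ‖h z.1‖ ≤ C :=
    ae_of_ae_map (p := fun x => ‖h x‖ ≤ C) measurable_fst.aemeasurable (by rw [hmap]; exact hbd)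
  have hint : Integrable (fun z : X × Y => h z.1 * g z.2) π := by
    refine ⟨hasm'.mul ((g.continuous.comp continuous_snd).aestronglyMeasurable), ?_⟩
    apply HasFiniteIntegral.of_bounded (C := C * ‖g‖)
    filter_upwards [hbdπ] with z hz
    rw [norm_mul]
    exact mul_le_mul hz (g.norm_coe_le_norm z.2) (norm_nonneg _) (le_trans (norm_nonneg _) hz)
  refine ⟨hint, ?_⟩
  -- integrability of the f-term
  obtain ⟨D, hD⟩ := hfb
  have hintf : Integrable (fun z : X × Y => f z.1 * g z.2) π := by
    refine ⟨((hf.comp continuous_fst).aestronglyMeasurable).mul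
      ((g.continuous.comp continuous_snd).aestronglyMeasurable), ?_⟩
    apply HasFiniteIntegral.of_bounded (C := D * ‖g‖)
    filter_upwards with z
    rw [norm_mul]
    exact mul_le_mul (hD z.1) (g.norm_coe_le_norm z.2) (norm_nonneg _)
      (le_trans (norm_nonneg _) (hD z.1))
  rw [← integral_sub hint hintf]
  have hdiff : ∀ z : X × Y, h z.1 * g z.2 - f z.1 * g z.2 = (h z.1 - f z.1) * g z.2 := by
    intro z; ring
  calc |∫ z : X × Y, h z.1 * g z.2 - f z.1 * g z.2 ∂π|
      ≤ ∫ z : X × Y, ‖h z.1 * g z.2 - f z.1 * g z.2‖ ∂π := by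
        simpa [Real.norm_eq_abs] using
          norm_integral_le_integral_norm (fun z : X × Y => h z.1 * g z.2 - f z.1 * g z.2) (μ := π)
    _ ≤ ∫ z : X × Y, ‖g‖ * ‖h z.1 - f z.1‖ ∂π := by
        apply integral_mono_of_nonneg (ae_of_all _ fun z => norm_nonneg _)
        · apply Integrable.const_mul
          have : AEStronglyMeasurable (fun z : X × Y => h z.1 - f z.1) π :=
            hasm'.sub ((hf.comp continuous_fst).aestronglyMeasurable)
          refine ⟨this.norm, ?_⟩
          apply HasFiniteIntegral.of_bounded (C := C + D)
          filter_upwards [hbdπ] with z hz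
          simp only [norm_norm]
          exact le_trans (norm_sub_le _ _) (add_le_add hz (hD z.1))
        · filter_upwards with z
          calc ‖h z.1 * g z.2 - f z.1 * g z.2‖ = ‖h z.1 - f z.1‖ * ‖g z.2‖ := by
                rw [hdiff z, norm_mul]
            _ ≤ ‖h z.1 - f z.1‖ * ‖g‖ :=
                mul_le_mul_of_nonneg_left (g.norm_coe_le_norm z.2) (norm_nonneg _)
            _ = ‖g‖ * ‖h z.1 - f z.1‖ := mul_comm _ _
    _ = ‖g‖ * ∫ z : X × Y, ‖h z.1 - f z.1‖ ∂π := integral_const_mul _ _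
    _ = ‖g‖ * ∫ x, ‖h x - f x‖ ∂μ := by
        congr 1
        rw [← hmap, integral_map measurable_fst.aemeasurable]
        exact (hasm.sub (hf.aestronglyMeasurable)).norm

/-- Let `X`, `Y` be Polish metric spaces, `μ`, `ν` finite positive Borel
measures of equal mass, and `κ_n, κ ∈ Π(μ,ν)` with `κ_n → κ` weakly.  Then for every
`h ∈ L^∞(X,μ)` and every bounded continuous `g : Y → ℝ`,
`∫ h(x) g(y) dκ_n(x,y) → ∫ h(x) g(y) dκ(x,y)`. -/
theorem stmt18 {X Y : Type*}
    [MetricSpace X] [CompleteSpace X] [TopologicalSpace.SeparableSpace X]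
    [MeasurableSpace X] [BorelSpace X]
    [MetricSpace Y] [CompleteSpace Y] [TopologicalSpace.SeparableSpace Y]
    [MeasurableSpace Y] [BorelSpace Y]
    (μ : Measure X) (ν : Measure Y) [IsFiniteMeasure μ] [IsFiniteMeasure ν]
    (hmass : μ Set.univ = ν Set.univ)
    (κs : ℕ → Measure (X × Y)) (κ : Measure (X × Y))
    (hκsfst : ∀ n, (κs n).fst = μ) (hκssnd : ∀ n, (κs n).snd = ν)
    (hκfst : κ.fst = μ) (hκsnd : κ.snd = ν)
    (hweak : ∀ f : BoundedContinuousFunction (X × Y) ℝ,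
      Tendsto (fun n => ∫ z, f z ∂(κs n)) atTop (nhds (∫ z, f z ∂κ)))
    (h : X → ℝ) (hh : MemLp h ⊤ μ) (g : BoundedContinuousFunction Y ℝ) :
    Tendsto (fun n => ∫ z : X × Y, h z.1 * g z.2 ∂(κs n)) atTop
      (nhds (∫ z : X × Y, h z.1 * g z.2 ∂κ)) := by
  have hfin : ∀ π : Measure (X × Y), π.fst = μ → IsFiniteMeasure π := by
    intro π hπ
    constructor
    have : π Set.univ = π.fst Set.univ := by
      rw [Measure.fst_apply MeasurableSet.univ]; rfl
    rw [this, hπ]; exact measure_lt_top μ _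
  have hκfin : IsFiniteMeasure κ := hfin κ hκfst
  have hκsfin : ∀ n, IsFiniteMeasure (κs n) := fun n => hfin (κs n) (hκsfst n)
  rw [Metric.tendsto_atTop]
  intro ε hε
  set δ : ℝ := ε / (3 * (‖g‖ + 1)) with hδdef
  have hg1 : 0 < ‖g‖ + 1 := by positivity
  have hδ : 0 < δ := by positivity
  -- approximate h by a bounded continuous f in L¹(μ)
  have hhint : Integrable h μ := hh.integrable le_top
  obtain ⟨f, hfapprox, -⟩ := hhint.exists_boundedContinuous_integral_sub_le hδ
  have hgδ : ‖g‖ * ∫ x, ‖h x - f x‖ ∂μ ≤ ε / 3 := by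
    calc ‖g‖ * ∫ x, ‖h x - f x‖ ∂μ ≤ (‖g‖ + 1) * δ := by
          apply mul_le_mul (by linarith [norm_nonneg g]) hfapprox
            (integral_nonneg fun x => norm_nonneg _) (le_of_lt hg1)
      _ = ε / 3 := by
          rw [hδdef]; field_simp
  -- the bounded continuous test function
  set F : BoundedContinuousFunction (X × Y) ℝ :=
    (f.compContinuous ⟨Prod.fst, continuous_fst⟩) *
      (g.compContinuous ⟨Prod.snd, continuous_snd⟩) with hF
  have hFval : ∀ z : X × Y, F z = f z.1 * g z.2 := fun z => rfl
  have hfb : ∃ C, ∀ x, ‖f x‖ ≤ C := ⟨‖f‖, fun x => f.norm_coe_le_norm x⟩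
  have hbound : ∀ (π : Measure (X × Y)), π.fst = μ →
      Integrable (fun z : X × Y => h z.1 * g z.2) π ∧
      |(∫ z : X × Y, h z.1 * g z.2 ∂π) - ∫ z, F z ∂π| ≤ ε / 3 := by
    intro π hπ
    have : IsFiniteMeasure π := hfin π hπ
    obtain ⟨hint, hle⟩ := stmt18_aux μ π hπ h hh f f.continuous hfb g
    refine ⟨hint, ?_⟩
    have : (∫ z, F z ∂π) = ∫ z : X × Y, f z.1 * g z.2 ∂π := by
      apply integral_congr_ae; filter_upwards with z; exact hFval z
    rw [this]
    exact le_trans hle hgδ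
  obtain ⟨hintκ, hboundκ⟩ := hbound κ hκfst
  -- weak convergence of F
  have hFtend := hweak F
  rw [Metric.tendsto_atTop] at hFtend
  obtain ⟨N, hN⟩ := hFtend (ε / 3) (by linarith)
  refine ⟨N, fun n hn => ?_⟩
  obtain ⟨hintn, hboundn⟩ := hbound (κs n) (hκsfst n)
  have hNn := hN n hn
  rw [Real.dist_eq] at hNn ⊢
  calc |(∫ z : X × Y, h z.1 * g z.2 ∂(κs n)) - ∫ z : X × Y, h z.1 * g z.2 ∂κ|
      ≤ |(∫ z : X × Y, h z.1 * g z.2 ∂(κs n)) - ∫ z, F z ∂(κs n)|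
        + |(∫ z, F z ∂(κs n)) - ∫ z, F z ∂κ|
        + |(∫ z, F z ∂κ) - ∫ z : X × Y, h z.1 * g z.2 ∂κ| := by
        have := abs_sub_le ((∫ z : X × Y, h z.1 * g z.2 ∂(κs n))) (∫ z, F z ∂κ)
          (∫ z : X × Y, h z.1 * g z.2 ∂κ)
        have h2 := abs_sub_le ((∫ z : X × Y, h z.1 * g z.2 ∂(κs n))) (∫ z, F z ∂(κs n))
          (∫ z, F z ∂κ)
        linarith
    _ < ε / 3 + ε / 3 + ε / 3 := by
        have : |(∫ z, F z ∂κ) - ∫ z : X × Y, h z.1 * g z.2 ∂κ| ≤ ε / 3 := by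
          rw [abs_sub_comm]; exact hboundκ
        have h1 : |(∫ z, F z ∂(κs n)) - ∫ z, F z ∂κ| < ε / 3 := hNn
        linarith
    _ = ε := by ring
end
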